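/- arXiv:2502.03648 — 9 statements merged into one kernel-verified Lean document; each statement's English description precedes it below -/
import Mathlib

section
/- Let φ : A → ℝ be a function on a set A ⊆ ℝ and suppose a ∈ A with φ(a) ≠ 0. Then the number of sign changes of φ on A equals the sum of the number of sign changes of φ on A ∩ (-∞, a] and the number of sign changes of φ on A ∩ [a, ∞). Here the number of sign changes sc(φ, S) is the supremum of all k ∈ ℕ such that there exist points θ_k < θ_{k-1} < ⋯ < θ_0 in S with φ(θ_i)·φ(θ_{i-1}) < 0 for 1 ≤ i ≤ k (with sup ∅ = 0). -/
open Set Filter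

/-- The number of sign changes of `φ` on the set `A`, valued in `ℕ∞`:
the supremum of all `k` such that there is a strictly decreasing chain
`θ_k < θ_{k-1} < ⋯ < θ_0` in `A` with `φ(θ_i)·φ(θ_{i-1}) < 0`. -/
noncomputable def signChanges (φ : ℝ → ℝ) (A : Set ℝ) : ℕ∞ :=
  sSup {m : ℕ∞ | ∃ k : ℕ, m = (k : ℕ∞) ∧ ∃ θ : Fin (k + 1) → ℝ,
    (∀ i, θ i ∈ A) ∧ (∀ i j : Fin (k + 1), i < j → θ j < θ i) ∧
    ∀ i : Fin k, φ (θ i.succ) * φ (θ i.castSucc) < 0}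


/-- ℕ-indexed version of a sign-change chain. -/
def IsChain' (φ : ℝ → ℝ) (A : Set ℝ) (k : ℕ) : Prop :=
  ∃ θ : ℕ → ℝ, (∀ i ≤ k, θ i ∈ A) ∧ (∀ i j : ℕ, i < j → j ≤ k → θ j < θ i) ∧
    ∀ i < k, φ (θ (i + 1)) * φ (θ i) < 0

lemma chainFin_iff (φ : ℝ → ℝ) (A : Set ℝ) (k : ℕ) :
    (∃ θ : Fin (k + 1) → ℝ,
      (∀ i, θ i ∈ A) ∧ (∀ i j : Fin (k + 1), i < j → θ j < θ i) ∧
      ∀ i : Fin k, φ (θ i.succ) * φ (θ i.castSucc) < 0) ↔ IsChain' φ A k := by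
  constructor
  · rintro ⟨θ, hmem, hmono, hsign⟩
    refine ⟨fun i => θ ⟨min i k, by omega⟩, fun i hi => hmem _, ?_, ?_⟩
    · intro i j hij hj
      exact hmono ⟨min i k, by omega⟩ ⟨min j k, by omega⟩ (by simp [Fin.lt_def]; omega)
    · intro i hi
      have := hsign ⟨i, hi⟩
      simpa [Fin.succ, Fin.castSucc, Fin.castAdd, Fin.castLE, Nat.min_eq_left,
        Nat.le_of_lt hi, Nat.succ_le_of_lt hi] using this
  · rintro ⟨θ, hmem, hmono, hsign⟩
    refine ⟨fun i => θ i, fun i => hmem i i.is_le, ?_, ?_⟩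
    · intro i j hij
      exact hmono i j (by exact_mod_cast hij) j.is_le
    · intro i
      have := hsign i i.isLt
      simpa using this

lemma chain_ne_zero {φ : ℝ → ℝ} {k : ℕ} {θ : ℕ → ℝ}
    (hsign : ∀ i < k, φ (θ (i + 1)) * φ (θ i) < 0) (hk : 1 ≤ k) :
    ∀ i ≤ k, φ (θ i) ≠ 0 := by
  intro i hi
  rcases lt_or_eq_of_le hi with h | rfl
  · have := hsign i h
    intro h0; rw [h0] at this; simp at this
  · have := hsign (i - 1) (by omega)
    rw [show i - 1 + 1 = i by omega] at this
    intro h0; rw [h0] at this; simp at this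

/-- A chain in `A ∩ Iic a` can be normalized so its top point is `a`. -/
lemma normLeft {φ : ℝ → ℝ} {A : Set ℝ} {a : ℝ} (ha : a ∈ A) (hφa : φ a ≠ 0) {k : ℕ}
    (h : IsChain' φ (A ∩ Set.Iic a) k) :
    ∃ θ : ℕ → ℝ, (∀ i ≤ k, θ i ∈ A ∩ Set.Iic a) ∧
      (∀ i j : ℕ, i < j → j ≤ k → θ j < θ i) ∧
      (∀ i < k, φ (θ (i + 1)) * φ (θ i) < 0) ∧ θ 0 = a := by
  rcases Nat.eq_zero_or_pos k with rfl | hk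
  · exact ⟨fun _ => a, fun i hi => ⟨ha, le_refl a⟩, by omega, by omega, rfl⟩
  obtain ⟨θ, hmem, hmono, hsign⟩ := h
  have hne := chain_ne_zero hsign hk
  have h0le : θ 0 ≤ a := (hmem 0 (by omega)).2
  rcases lt_trichotomy (φ (θ 0) * φ a) 0 with hc | hc | hc
  · -- opposite signs: shift and put a on top
    have h0lt : θ 0 < a := by
      rcases lt_or_eq_of_le h0le with h | h
      · exact h
      · exfalso; rw [h] at hc; nlinarith
    refine ⟨fun i => if i = 0 then a else θ (i - 1), ?_, ?_, ?_, by simp⟩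
    · intro i hi
      by_cases h1 : i = 0
      · simpa [h1] using ha
      · simp [h1]; exact hmem (i - 1) (by omega)
    · intro i j hij hj
      by_cases h1 : i = 0
      · subst h1
        simp [show j ≠ 0 by omega]
        rcases Nat.eq_zero_or_pos (j - 1) with h2 | h2
        · rw [h2]; exact h0lt
        · exact lt_trans (hmono 0 (j - 1) h2 (by omega)) h0lt
      · simp [h1, show j ≠ 0 by omega]
        exact hmono (i - 1) (j - 1) (by omega) (by omega)
    · intro i hi
      by_cases h1 : i = 0
      · subst h1; simpa using hc
      · simp [h1, show i + 1 ≠ 0 by omega, show i + 1 - 1 = i from rfl]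
        have := hsign (i - 1) (by omega)
        rw [show i - 1 + 1 = i by omega] at this
        exact this
  · exact absurd hc (mul_ne_zero (hne 0 (by omega)) hφa)
  · -- same sign: replace θ 0 with a
    refine ⟨fun i => if i = 0 then a else θ i, ?_, ?_, ?_, by simp⟩
    · intro i hi
      by_cases h1 : i = 0
      · simpa [h1] using ha
      · simp [h1]; exact hmem i hi
    · intro i j hij hj
      by_cases h1 : i = 0
      · subst h1
        simp [show j ≠ 0 by omega]
        exact lt_of_lt_of_le (hmono 0 j (by omega) hj) h0le
      · simp [h1, show j ≠ 0 by omega]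
        exact hmono i j hij hj
    · intro i hi
      by_cases h1 : i = 0
      · subst h1
        simp
        have h2 := hsign 0 hk
        nlinarith [sq_nonneg (φ (θ 0))]
      · simp [h1]
        exact hsign i hi

/-- A chain in `A ∩ Ici a` can be normalized so its bottom point is `a`. -/
lemma normRight {φ : ℝ → ℝ} {A : Set ℝ} {a : ℝ} (ha : a ∈ A) (hφa : φ a ≠ 0) {k : ℕ}
    (h : IsChain' φ (A ∩ Set.Ici a) k) :
    ∃ θ : ℕ → ℝ, (∀ i ≤ k, θ i ∈ A ∩ Set.Ici a) ∧
      (∀ i j : ℕ, i < j → j ≤ k → θ j < θ i) ∧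
      (∀ i < k, φ (θ (i + 1)) * φ (θ i) < 0) ∧ θ k = a := by
  rcases Nat.eq_zero_or_pos k with rfl | hk
  · exact ⟨fun _ => a, fun i hi => ⟨ha, le_refl a⟩, by omega, by omega, rfl⟩
  obtain ⟨θ, hmem, hmono, hsign⟩ := h
  have hne := chain_ne_zero hsign hk
  have hkle : a ≤ θ k := (hmem k le_rfl).2
  rcases lt_trichotomy (φ (θ k) * φ a) 0 with hc | hc | hc
  · -- opposite signs: shift and put a at the bottom
    have hklt : a < θ k := by
      rcases lt_or_eq_of_le hkle with h | h
      · exact h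
      · exfalso; rw [← h] at hc; nlinarith
    refine ⟨fun i => if i = k then a else θ (i + 1), ?_, ?_, ?_, by simp⟩
    · intro i hi
      by_cases h1 : i = k
      · simpa [h1] using ha
      · simp [h1]; exact hmem (i + 1) (by omega)
    · intro i j hij hj
      by_cases h1 : j = k
      · simp [h1, show i ≠ k by omega]
        rcases lt_or_eq_of_le (show i + 1 ≤ k by omega) with h2 | h2
        · exact lt_trans hklt (hmono (i + 1) k h2 le_rfl)
        · rw [h2]; exact hklt
      · simp [h1, show i ≠ k by omega]
        exact hmono (i + 1) (j + 1) (by omega) (by omega)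
    · intro i hi
      by_cases h1 : i + 1 = k
      · simp only [if_pos h1, if_neg (show i ≠ k by omega)]
        rw [h1, mul_comm]
        exact hc
      · simp only [if_neg h1, if_neg (show i ≠ k by omega)]
        exact hsign (i + 1) (by omega)
  · exact absurd hc (mul_ne_zero (hne k le_rfl) hφa)
  · -- same sign: replace θ k with a
    refine ⟨fun i => if i = k then a else θ i, ?_, ?_, ?_, by simp⟩
    · intro i hi
      by_cases h1 : i = k
      · simpa [h1] using ha
      · simp [h1]; exact hmem i hi
    · intro i j hij hj
      by_cases h1 : j = k
      · simp [h1, show i ≠ k by omega]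
        exact lt_of_le_of_lt hkle (hmono i k (by omega) le_rfl)
      · simp [h1, show i ≠ k by omega]
        exact hmono i j hij hj
    · intro i hi
      by_cases h1 : i + 1 = k
      · simp only [if_pos h1, if_neg (show i ≠ k by omega)]
        have h2 := hsign i hi
        rw [h1] at h2
        nlinarith [sq_nonneg (φ (θ k))]
      · simp only [if_neg h1, if_neg (show i ≠ k by omega)]
        exact hsign i hi

lemma glue {φ : ℝ → ℝ} {A : Set ℝ} {a : ℝ} (ha : a ∈ A) (hφa : φ a ≠ 0) {k j : ℕ}
    (hL : IsChain' φ (A ∩ Set.Iic a) k) (hR : IsChain' φ (A ∩ Set.Ici a) j) :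
    IsChain' φ A (k + j) := by
  obtain ⟨θ, hLmem, hLmono, hLsign, hθ0⟩ := normLeft ha hφa hL
  obtain ⟨η, hRmem, hRmono, hRsign, hηj⟩ := normRight ha hφa hR
  have hθlt : ∀ i ≤ k, 1 ≤ i → θ i < a := fun i hi h1 => hθ0 ▸ hLmono 0 i h1 hi
  have hηge : ∀ i ≤ j, a ≤ η i := fun i hi => (hRmem i hi).2
  refine ⟨fun i => if i ≤ j then η i else θ (i - j), ?_, ?_, ?_⟩
  · intro i hi
    by_cases h1 : i ≤ j
    · simp only [if_pos h1]; exact (hRmem i h1).1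
    · simp only [if_neg h1]; exact (hLmem (i - j) (by omega)).1
  · intro i m him hm
    by_cases h1 : m ≤ j
    · simp only [if_pos h1, if_pos (by omega : i ≤ j)]
      exact hRmono i m him h1
    · by_cases h2 : i ≤ j
      · simp only [if_neg h1, if_pos h2]
        calc θ (m - j) < a := hθlt (m - j) (by omega) (by omega)
        _ ≤ η i := hηge i h2
      · simp only [if_neg h1, if_neg h2]
        exact hLmono (i - j) (m - j) (by omega) (by omega)
  · intro i hi
    by_cases h1 : i < j
    · simp only [if_pos (show i + 1 ≤ j by omega), if_pos (show i ≤ j by omega)]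
      exact hRsign i h1
    · have hζi : (if i ≤ j then η i else θ (i - j)) = θ (i - j) := by
        by_cases h2 : i ≤ j
        · have : i = j := by omega
          simp [this, hηj, hθ0]
        · simp [h2]
      simp only [if_neg (show ¬ i + 1 ≤ j by omega), hζi,
        show i + 1 - j = i - j + 1 by omega]
      exact hLsign (i - j) (by omega)

lemma split {φ : ℝ → ℝ} {A : Set ℝ} {a : ℝ} (ha : a ∈ A) (hφa : φ a ≠ 0) {k : ℕ}
    (h : IsChain' φ A k) :
    ∃ k₁ k₂ : ℕ, k₁ + k₂ = k ∧ IsChain' φ (A ∩ Set.Iic a) k₁ ∧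
      IsChain' φ (A ∩ Set.Ici a) k₂ := by
  have htriv : IsChain' φ (A ∩ Set.Iic a) 0 ∧ IsChain' φ (A ∩ Set.Ici a) 0 :=
    ⟨⟨fun _ => a, fun i hi => ⟨ha, le_refl a⟩, by omega, by omega⟩,
     ⟨fun _ => a, fun i hi => ⟨ha, le_refl a⟩, by omega, by omega⟩⟩
  rcases Nat.eq_zero_or_pos k with rfl | hk
  · exact ⟨0, 0, rfl, htriv.1, htriv.2⟩
  obtain ⟨θ, hmem, hmono, hsign⟩ := h
  have hne := chain_ne_zero hsign hk
  by_cases hS : ∃ i, i ≤ k ∧ θ i ≤ a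
  · set p := Nat.find hS with hp
    obtain ⟨hpk, hθp⟩ := Nat.find_spec hS
    have hgt : ∀ i < p, a < θ i := by
      intro i hi
      have := Nat.find_min hS hi
      push_neg at this
      rcases lt_or_ge i k with h2 | h2
      · exact this (by omega)
      · omega
    have hle : ∀ i, p ≤ i → i ≤ k → θ i ≤ a := by
      intro i hpi hik
      rcases lt_or_eq_of_le hpi with h2 | h2
      · exact le_of_lt (lt_of_lt_of_le (hmono p i h2 hik) hθp)
      · exact h2 ▸ hθp
    rcases Nat.eq_zero_or_pos p with hp0 | hpp
    · -- whole chain is ≤ a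
      refine ⟨k, 0, rfl, ⟨θ, fun i hi => ⟨hmem i hi, hle i (by omega) hi⟩, hmono, hsign⟩,
        htriv.2⟩
    · -- 1 ≤ p ≤ k
      have hsc := hsign (p - 1) (by omega)
      rw [show p - 1 + 1 = p by omega] at hsc
      rcases lt_trichotomy (φ a * φ (θ (p - 1))) 0 with hc | hc | hc
      · -- a and θ (p-1) have opposite signs: right chain a, θ_{p-1}, …, θ_0 of length p
        refine ⟨k - p, p, by omega, ?_, ?_⟩
        · exact ⟨fun i => θ (i + p),
            fun i hi => ⟨hmem (i + p) (by omega), hle (i + p) (by omega) (by omega)⟩,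
            fun i m him hm => hmono (i + p) (m + p) (by omega) (by omega),
            fun i hi => by
              have := hsign (i + p) (by omega)
              simpa [show i + 1 + p = i + p + 1 by omega] using this⟩
        · refine ⟨fun i => if i = p then a else θ i, ?_, ?_, ?_⟩
          · intro i hi
            by_cases h1 : i = p
            · simpa [h1] using ha
            · simp only [if_neg h1]
              exact ⟨hmem i (by omega), le_of_lt (hgt i (by omega))⟩
          · intro i m him hm
            by_cases h1 : m = p
            · simp only [if_pos h1, if_neg (show i ≠ p by omega)]
              exact hgt i (by omega)
            · simp only [if_neg h1, if_neg (show i ≠ p by omega)]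
              exact hmono i m him (by omega)
          · intro i hi
            by_cases h1 : i + 1 = p
            · simp only [if_pos h1, if_neg (show i ≠ p by omega)]
              rw [show i = p - 1 by omega]
              exact hc
            · simp only [if_neg h1, if_neg (show i ≠ p by omega)]
              exact hsign i (by omega)
      · exact absurd hc (mul_ne_zero hφa (hne (p - 1) (by omega)))
      · -- a and θ p have opposite signs: left chain θ_k, …, θ_p, a of length k - p + 1
        have hca : φ (θ p) * φ a < 0 := by
          nlinarith [sq_nonneg (φ (θ (p - 1)))]
        have hplt : θ p < a := by
          rcases lt_or_eq_of_le hθp with h2 | h2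
          · exact h2
          · exfalso; rw [h2] at hca; nlinarith
        refine ⟨k - p + 1, p - 1, by omega, ?_, ?_⟩
        · refine ⟨fun i => if i = 0 then a else θ (i - 1 + p), ?_, ?_, ?_⟩
          · intro i hi
            by_cases h1 : i = 0
            · simpa [h1] using ha
            · simp only [if_neg h1]
              exact ⟨hmem (i - 1 + p) (by omega), hle (i - 1 + p) (by omega) (by omega)⟩
          · intro i m him hm
            by_cases h1 : i = 0
            · simp only [if_pos h1, if_neg (show m ≠ 0 by omega)]
              rcases Nat.eq_zero_or_pos (m - 1) with h2 | h2
              · rw [h2]; simpa using hplt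
              · exact lt_trans (hmono p (m - 1 + p) (by omega) (by omega)) hplt
            · simp only [if_neg h1, if_neg (show m ≠ 0 by omega)]
              exact hmono (i - 1 + p) (m - 1 + p) (by omega) (by omega)
          · intro i hi
            by_cases h1 : i = 0
            · simp only [if_pos (show i = 0 from h1), if_neg (show i + 1 ≠ 0 by omega)]
              rw [h1]
              simpa using hca
            · simp only [if_neg h1, if_neg (show i + 1 ≠ 0 by omega),
                show i + 1 - 1 = i from rfl]
              rw [show i - 1 + p = i + p - 1 by omega]
              have := hsign (i + p - 1) (by omega)
              rw [show i + p - 1 + 1 = i + p by omega] at this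
              exact this
        · exact ⟨θ, fun i hi => ⟨hmem i (by omega), le_of_lt (hgt i (by omega))⟩,
            fun i m him hm => hmono i m him (by omega),
            fun i hi => hsign i (by omega)⟩
  · -- whole chain is > a
    push_neg at hS
    refine ⟨0, k, by omega, htriv.1,
      ⟨θ, fun i hi => ⟨hmem i hi, le_of_lt (hS i hi)⟩, hmono, hsign⟩⟩

lemma signChanges_eq (φ : ℝ → ℝ) (A : Set ℝ) :
    signChanges φ A = sSup {m : ℕ∞ | ∃ k : ℕ, m = (k : ℕ∞) ∧ IsChain' φ A k} := by
  unfold signChanges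
  congr 1
  ext m
  constructor
  · rintro ⟨k, rfl, hθ⟩
    exact ⟨k, rfl, (chainFin_iff φ A k).1 hθ⟩
  · rintro ⟨k, rfl, hθ⟩
    exact ⟨k, rfl, (chainFin_iff φ A k).2 hθ⟩

theorem signChanges_split (φ : ℝ → ℝ) (A : Set ℝ) (a : ℝ)
    (ha : a ∈ A) (hφa : φ a ≠ 0) :
    signChanges φ A =
      signChanges φ (A ∩ Set.Iic a) + signChanges φ (A ∩ Set.Ici a) := by
  have hL0 : IsChain' φ (A ∩ Set.Iic a) 0 :=
    ⟨fun _ => a, fun i hi => ⟨ha, le_refl a⟩, by omega, by omega⟩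
  have hR0 : IsChain' φ (A ∩ Set.Ici a) 0 :=
    ⟨fun _ => a, fun i hi => ⟨ha, le_refl a⟩, by omega, by omega⟩
  rw [signChanges_eq, signChanges_eq, signChanges_eq]
  apply le_antisymm
  · apply sSup_le
    rintro m ⟨k, rfl, hch⟩
    obtain ⟨k₁, k₂, hsum, h1, h2⟩ := split ha hφa hch
    have e1 : (k₁ : ℕ∞) ≤ sSup {m : ℕ∞ | ∃ k : ℕ, m = (k : ℕ∞) ∧
        IsChain' φ (A ∩ Set.Iic a) k} := le_sSup ⟨k₁, rfl, h1⟩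
    have e2 : (k₂ : ℕ∞) ≤ sSup {m : ℕ∞ | ∃ k : ℕ, m = (k : ℕ∞) ∧
        IsChain' φ (A ∩ Set.Ici a) k} := le_sSup ⟨k₂, rfl, h2⟩
    calc (k : ℕ∞) = (k₁ : ℕ∞) + (k₂ : ℕ∞) := by rw [← hsum]; push_cast; ring
    _ ≤ _ := add_le_add e1 e2
  · have hne1 : Set.Nonempty {m : ℕ∞ | ∃ k : ℕ, m = (k : ℕ∞) ∧
        IsChain' φ (A ∩ Set.Iic a) k} := ⟨0, 0, rfl, hL0⟩
    have hne2 : Set.Nonempty {m : ℕ∞ | ∃ k : ℕ, m = (k : ℕ∞) ∧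
        IsChain' φ (A ∩ Set.Ici a) k} := ⟨0, 0, rfl, hR0⟩
    rw [ENat.sSup_add hne1]
    apply iSup₂_le
    rintro b ⟨k₁, rfl, h1⟩
    rw [ENat.add_sSup hne2]
    apply iSup₂_le
    rintro c ⟨k₂, rfl, h2⟩
    have hg : IsChain' φ A (k₁ + k₂) := glue ha hφa h1 h2
    refine le_trans (le_of_eq ?_) (le_sSup (show ((k₁ + k₂ : ℕ) : ℕ∞) ∈ _ from ⟨k₁ + k₂, rfl, hg⟩))
    push_cast; ring
end

section
/- Let K = [-r, 0] ∪ {1, …, N} ⊆ ℝ for some r > 0 and N ∈ ℕ, and let φ : K → ℝ be continuous with φ ≢ 0. Let a ∈ [-r, 0), let (φ_n) be continuous functions K → ℝ, none identically zero, converging uniformly to φ, and let (a_n) be a sequence in [-r, 0) with a_n → a. Then sc(φ, [a,0] ∪ {1,…,N}) ≤ liminf_{n→∞} sc(φ_n, [a_n,0] ∪ {1,…,N}), where sc denotes the number of sign changes (valued in ℕ ∪ {∞}). -/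
open Set Filter

/-- The set `{1, …, N}` viewed inside `ℝ`. -/
def intPart (N : ℕ) : Set ℝ := {x : ℝ | ∃ i : ℕ, 1 ≤ i ∧ i ≤ N ∧ x = (i : ℝ)}

private lemma same_sign {w w' : ℝ} (hw : w ≠ 0) (h : |w' - w| < |w|) : 0 < w * w' := by
  rcases hw.lt_or_gt with h1 | h1
  · have ha : |w| = -w := abs_of_neg h1
    have h2 := abs_lt.1 h
    rw [ha] at h2
    nlinarith [h2.1, h2.2]
  · have ha : |w| = w := abs_of_pos h1
    have h2 := abs_lt.1 h
    rw [ha] at h2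
    nlinarith [h2.1, h2.2]

private lemma sign_pres {u v u' v' : ℝ} (h : u * v < 0)
    (hu : |u' - u| < |u|) (hv : |v' - v| < |v|) : u' * v' < 0 := by
  have hune : u ≠ 0 := fun h0 => by simp [h0] at h
  have hvne : v ≠ 0 := fun h0 => by simp [h0] at h
  have h1 := same_sign hune hu
  have h2 := same_sign hvne hv
  nlinarith [mul_pos h1 h2]

private lemma nonzero_of_signs {φ : ℝ → ℝ} {k : ℕ} (hk : 0 < k) (θ : Fin (k+1) → ℝ)
    (hsign : ∀ i : Fin k, φ (θ i.succ) * φ (θ i.castSucc) < 0) :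
    ∀ i, φ (θ i) ≠ 0 := by
  intro i
  rcases lt_or_ge i.val k with h | h
  · have hs := hsign ⟨i.val, h⟩
    have hi : (⟨i.val, h⟩ : Fin k).castSucc = i := by ext; simp
    rw [hi] at hs
    intro h0; rw [h0, mul_zero] at hs; exact lt_irrefl _ hs
  · have hik : i.val = k := le_antisymm (Nat.lt_succ_iff.mp i.isLt) h
    have hs := hsign ⟨k-1, by omega⟩
    have hi : (⟨k-1, by omega⟩ : Fin k).succ = i := by
      ext; simp; omega
    rw [hi] at hs
    intro h0; rw [h0, zero_mul] at hs; exact lt_irrefl _ hs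

/-- Lower semicontinuity of the sign-change count, jointly in the function
(uniform convergence on `K = [-r,0] ∪ {1,…,N}`) and the left endpoint. -/
theorem signChanges_liminf_le (r : ℝ) (hr : 0 < r) (N : ℕ)
    (φ : ℝ → ℝ) (φn : ℕ → ℝ → ℝ) (a : ℝ) (an : ℕ → ℝ)
    (K : Set ℝ) (hK : K = Set.Icc (-r) 0 ∪ intPart N)
    (hφ : ContinuousOn φ K) (hφ0 : ∃ s ∈ K, φ s ≠ 0)
    (hφn : ∀ n, ContinuousOn (φn n) K)
    (hφn0 : ∀ n, ∃ s ∈ K, φn n s ≠ 0)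
    (hconv : TendstoUniformlyOn φn φ atTop K)
    (hamem : a ∈ Set.Ico (-r) 0) (hanmem : ∀ n, an n ∈ Set.Ico (-r) (0:ℝ))
    (han : Tendsto an atTop (nhds a)) :
    signChanges φ (Set.Icc a 0 ∪ intPart N) ≤
      Filter.liminf (fun n => signChanges (φn n) (Set.Icc (an n) 0 ∪ intPart N))
        Filter.atTop := by
  have ha0 : a < 0 := hamem.2
  have har : -r ≤ a := hamem.1
  have hA : Set.Icc a 0 ∪ intPart N ⊆ K := by
    rw [hK]
    rintro x (⟨hx1, hx2⟩ | hx)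
    · exact Or.inl ⟨le_trans har hx1, hx2⟩
    · exact Or.inr hx
  rw [signChanges]
  apply sSup_le
  rintro m ⟨k, rfl, θ, hmem, hmono, hsign⟩
  rcases Nat.eq_zero_or_pos k with hk | hk
  · subst hk
    simp only [Nat.cast_zero]
    exact zero_le
  -- k ≥ 1 case
  have haθ : ∀ i, a ≤ θ i := by
    intro i
    rcases hmem i with ⟨h1, _⟩ | ⟨j, hj1, _, hj3⟩
    · exact h1
    · have : (1:ℝ) ≤ (j:ℝ) := by exact_mod_cast hj1
      rw [hj3]; linarith
  set L : Fin (k+1) := Fin.last k with hL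
  have hLmin : ∀ i, θ L ≤ θ i := by
    intro i
    rcases eq_or_lt_of_le (Fin.le_last i) with h | h
    · rw [h]
    · exact le_of_lt (hmono i L h)
  -- construct perturbed θ' with all points > a
  obtain ⟨θ', hmem', hmono', hsign', hgt'⟩ :
      ∃ θ' : Fin (k+1) → ℝ, (∀ i, θ' i ∈ Set.Icc a 0 ∪ intPart N) ∧
        (∀ i j : Fin (k+1), i < j → θ' j < θ' i) ∧
        (∀ i : Fin k, φ (θ' i.succ) * φ (θ' i.castSucc) < 0) ∧
        (∀ i, a < θ' i) := by
    rcases eq_or_lt_of_le (haθ L) with hLa | hLa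
    swap
    · exact ⟨θ, hmem, hmono, hsign, fun i => lt_of_lt_of_le hLa (hLmin i)⟩
    -- θ L = a : perturb the last point
    have haK : a ∈ K := by
      rw [hK]; exact Or.inl ⟨har, le_of_lt ha0⟩
    have hφa : φ a ≠ 0 := by
      have := nonzero_of_signs hk θ hsign L
      rwa [hLa]
    have hc : ContinuousWithinAt φ K a := hφ a haK
    have hev : ∀ᶠ x in nhdsWithin a K, 0 < φ a * φ x := by
      have ht : Tendsto (fun x => φ a * φ x) (nhdsWithin a K) (nhds (φ a * φ a)) :=
        (continuousWithinAt_const.mul hc)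
      have hpos : 0 < φ a * φ a := mul_self_pos.mpr hφa
      exact ht.eventually (eventually_gt_nhds hpos)
    obtain ⟨δ, hδ, hball⟩ := Metric.mem_nhdsWithin_iff.mp hev
    set j : Fin (k+1) := ⟨k-1, by omega⟩ with hj
    have hjL : j < L := by
      simp only [Fin.lt_def, hj, hL, Fin.last]
      omega
    have hθj : a < θ j := by rw [hLa]; exact hmono j L hjL
    set c : ℝ := min (min (a + δ) (θ j)) 0 with hcdef
    have hac : a < c := lt_min (lt_min (by linarith) hθj) ha0
    set b : ℝ := (a + c) / 2 with hbdef
    have hab : a < b := by rw [hbdef]; linarith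
    have hbc : b < c := by rw [hbdef]; linarith
    have hb0 : b ≤ 0 := le_of_lt (lt_of_lt_of_le hbc (min_le_right _ _))
    have hbj : b < θ j := lt_of_lt_of_le hbc (le_trans (min_le_left _ _) (min_le_right _ _))
    have hbδ : b < a + δ := lt_of_lt_of_le hbc (le_trans (min_le_left _ _) (min_le_left _ _))
    have hbmem : b ∈ Set.Icc a 0 := ⟨le_of_lt hab, hb0⟩
    have hbK : b ∈ K := hA (Or.inl hbmem)
    have hbsign : 0 < φ a * φ b := by
      refine hball ⟨?_, hbK⟩
      rw [Metric.mem_ball, Real.dist_eq, abs_of_pos (by linarith : (0:ℝ) < b - a)]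
      linarith
    refine ⟨fun i => if i = L then b else θ i, ?_, ?_, ?_, ?_⟩
    · intro i
      by_cases h : i = L
      · dsimp only; rw [if_pos h]; exact Or.inl hbmem
      · dsimp only; rw [if_neg h]; exact hmem i
    · intro i i' hii'
      have hiL : i ≠ L := by
        intro h; rw [h] at hii'; exact absurd hii' (not_lt.mpr (Fin.le_last i'))
      by_cases h : i' = L
      · dsimp only; rw [if_pos h, if_neg hiL]
        -- goal : b < θ i ; i < L so i ≤ j
        have hij : i ≤ j := by
          have : i.val < k := by
            have := hii'; rw [h] at this
            simpa [Fin.lt_def, hL, Fin.last] using this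
          simp only [Fin.le_def, hj]; omega
        rcases eq_or_lt_of_le hij with he | hl
        · rw [← he] at hbj; exact hbj
        · exact lt_trans hbj (hmono i j hl)
      · dsimp only; rw [if_neg h, if_neg hiL]
        exact hmono i i' hii'
    · intro i
      have hcsL : (i.castSucc : Fin (k+1)) ≠ L := (Fin.castSucc_lt_last i).ne
      by_cases h : (i.succ : Fin (k+1)) = L
      · dsimp only; rw [if_pos h, if_neg hcsL]
        have hs := hsign i
        rw [h, ← hLa] at hs
        -- hs : φ a * φ (θ i.castSucc) < 0, hbsign : 0 < φ a * φ b
        nlinarith [mul_neg_of_pos_of_neg hbsign hs, sq_nonneg (φ a)]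
      · dsimp only; rw [if_neg h, if_neg hcsL]
        exact hsign i
    · intro i
      by_cases h : i = L
      · dsimp only; rw [if_pos h]; exact hab
      · dsimp only; rw [if_neg h]
        have hiL : i < L := lt_of_le_of_ne (Fin.le_last i) h
        rw [hLa]
        exact hmono i L hiL
  have hne' : ∀ i, φ (θ' i) ≠ 0 := nonzero_of_signs hk θ' hsign'
  have hmin' : ∀ i, θ' L ≤ θ' i := by
    intro i
    rcases eq_or_lt_of_le (Fin.le_last i) with h | h
    · rw [h]
    · exact le_of_lt (hmono' i L h)
  -- the positive ε
  set ε : ℝ := Finset.univ.inf' ⟨L, Finset.mem_univ L⟩ (fun i => |φ (θ' i)|) with hε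
  have hεpos : 0 < ε := by
    rw [hε]; refine (Finset.lt_inf'_iff _).2 ?_
    intro i _
    exact abs_pos.mpr (hne' i)
  have hεle : ∀ i, ε ≤ |φ (θ' i)| := fun i => Finset.inf'_le _ (Finset.mem_univ i)
  -- eventual facts
  have E1 : ∀ᶠ n in atTop, an n < θ' L := han.eventually (eventually_lt_nhds (hgt' L))
  have E2 : ∀ᶠ n in atTop, ∀ x ∈ K, dist (φ x) (φn n x) < ε :=
    Metric.tendstoUniformlyOn_iff.mp hconv ε hεpos
  have hfinal : ∀ᶠ n in atTop,
      (k : ℕ∞) ≤ signChanges (φn n) (Set.Icc (an n) 0 ∪ intPart N) := by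
    filter_upwards [E1, E2] with n h1 h2
    apply le_sSup
    refine ⟨k, rfl, θ', ?_, hmono', ?_⟩
    · intro i
      rcases hmem' i with ⟨_, hx2⟩ | hx
      · exact Or.inl ⟨le_of_lt (lt_of_lt_of_le h1 (hmin' i)), hx2⟩
      · exact Or.inr hx
    · intro i
      have hb1 : |φn n (θ' i.succ) - φ (θ' i.succ)| < |φ (θ' i.succ)| := by
        have := h2 _ (hA (hmem' i.succ))
        rw [Real.dist_eq, abs_sub_comm] at this
        exact lt_of_lt_of_le this (hεle i.succ)
      have hb2 : |φn n (θ' i.castSucc) - φ (θ' i.castSucc)| < |φ (θ' i.castSucc)| := by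
        have := h2 _ (hA (hmem' i.castSucc))
        rw [Real.dist_eq, abs_sub_comm] at this
        exact lt_of_lt_of_le this (hεle i.castSucc)
      exact sign_pres (hsign' i) hb1 hb2
  rw [Filter.liminf_eq]
  exact le_sSup hfinal
end

section
/- Let a < 0 and φ : [a, 0] → ℝ be C¹ with all zeros of φ in [a, 0] simple and φ not identically zero. Suppose (φ_n) is a sequence of C¹ functions on [a, 0], none identically zero, with φ_n → φ and φ_n' → φ' uniformly on [a, 0]. If moreover φ(a) ≠ 0 and φ(0) ≠ 0, then for all sufficiently large n, the number of sign changes of φ_n on [a, 0] equals the number of sign changes of φ on [a, 0]. -/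
open Set Filter Topology

private lemma mul_pos_of_abs_sub_lt {u v : ℝ} (h : |u - v| < |v|) : 0 < u * v := by
  have hv : v ≠ 0 := by rintro rfl; simp at h; exact (abs_nonneg u).not_gt h
  rcases hv.lt_or_gt with hv' | hv'
  · have h2 := abs_lt.1 h
    rw [abs_of_neg hv'] at h2
    have hu : u < 0 := by linarith [h2.2]
    exact mul_pos_of_neg_of_neg hu hv'
  · have h2 := abs_lt.1 h
    rw [abs_of_pos hv'] at h2
    have hu : 0 < u := by linarith [h2.1]
    exact mul_pos hu hv'

lemma mul_pos_of_no_zero {a : ℝ} {ψ : ℝ → ℝ} (hc : ContinuousOn ψ (Icc a 0))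
    {x y : ℝ} (hx : x ∈ Icc a 0) (hy : y ∈ Icc a 0) (hxy : x ≤ y)
    (h0 : ∀ t ∈ Icc x y, ψ t ≠ 0) : 0 < ψ x * ψ y := by
  have hsub : Icc x y ⊆ Icc a 0 := Icc_subset_Icc hx.1 hy.2
  have hcont := hc.mono hsub
  rcases lt_trichotomy (ψ x) 0 with h1 | h1 | h1
  · rcases lt_trichotomy (ψ y) 0 with h2 | h2 | h2
    · exact mul_pos_of_neg_of_neg h1 h2
    · exact absurd h2 (h0 y (right_mem_Icc.2 hxy))
    · obtain ⟨t, ht, ht0⟩ := intermediate_value_Ioo hxy hcont ⟨h1, h2⟩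
      exact absurd ht0 (h0 t (Ioo_subset_Icc_self ht))
  · exact absurd h1 (h0 x (left_mem_Icc.2 hxy))
  · rcases lt_trichotomy (ψ y) 0 with h2 | h2 | h2
    · obtain ⟨t, ht, ht0⟩ := intermediate_value_Ioo' hxy hcont ⟨h2, h1⟩
      exact absurd ht0 (h0 t (Ioo_subset_Icc_self ht))
    · exact absurd h2 (h0 y (right_mem_Icc.2 hxy))
    · exact mul_pos h1 h2

lemma exists_sign_near_zero {a : ℝ} {φ : ℝ → ℝ} {z L : ℝ}
    (hd : HasDerivWithinAt φ L (Icc a 0) z) (hz0 : φ z = 0) (hL : L ≠ 0) :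
    ∃ ε > 0, ∀ x ∈ Icc a 0, x ≠ z → |x - z| < ε → 0 < φ x * (L * (x - z)) := by
  have hslope := hasDerivWithinAt_iff_tendsto_slope.mp hd
  have habs : {x | |slope φ z x - L| < |L|} ∈ 𝓝[Icc a 0 \ {z}] z := by
    have h1 := hslope (Metric.ball_mem_nhds L (abs_pos.2 hL))
    filter_upwards [h1] with u hu
    simpa [Real.dist_eq] using hu
  obtain ⟨ε, hε, hsub⟩ := Metric.mem_nhdsWithin_iff.mp habs
  refine ⟨ε, hε, fun x hx hxz hxε => ?_⟩
  have hx' : |slope φ z x - L| < |L| := by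
    apply hsub
    exact ⟨by simpa [Metric.mem_ball, Real.dist_eq] using hxε, hx, hxz⟩
  have hxz' : x - z ≠ 0 := sub_ne_zero.mpr hxz
  have hpos : 0 < slope φ z x * L := mul_pos_of_abs_sub_lt hx'
  have hs : slope φ z x = φ x / (x - z) := by
    simp [slope_def_field, hz0]
  have heq : φ x * (L * (x - z)) = (slope φ z x * L) * (x - z) ^ 2 := by
    rw [hs]; field_simp
  rw [heq]
  exact mul_pos hpos (by positivity)

lemma finite_zeros {a : ℝ} {φ : ℝ → ℝ} (hc : ContinuousOn φ (Icc a 0))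
    (hiso : ∀ z ∈ Icc a 0, φ z = 0 → ∃ ε > 0, ∀ x ∈ Icc a 0, x ≠ z → |x - z| < ε → φ x ≠ 0) :
    {x ∈ Icc a 0 | φ x = 0}.Finite := by
  set Z := {x ∈ Icc a 0 | φ x = 0} with hZ
  have hZclosed : IsClosed Z := by
    have h := hc.preimage_isClosed_of_isClosed isClosed_Icc (isClosed_singleton (x := (0:ℝ)))
    have heq : Z = Icc a 0 ∩ φ ⁻¹' {0} := by ext x; simp [hZ]
    rwa [heq]
  have hZcomp : IsCompact Z := isCompact_Icc.of_isClosed_subset hZclosed (fun x hx => hx.1)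
  choose! ε hεpos hεprop using hiso
  have hcover : Z ⊆ ⋃ z ∈ Z, Metric.ball z (ε z) := by
    intro x hx
    simp only [mem_iUnion]
    exact ⟨x, hx, Metric.mem_ball_self (hεpos x hx.1 hx.2)⟩
  obtain ⟨b, hbZ, hbfin, hbcover⟩ := hZcomp.elim_finite_subcover_image
    (fun z _ => Metric.isOpen_ball) hcover
  apply hbfin.subset
  intro x hx
  obtain ⟨z, hz, hxz⟩ := by
    have := hbcover hx
    simpa only [mem_iUnion, exists_prop] using this
  have hzZ : z ∈ Z := hbZ hz
  by_cases hxez : x = z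
  · rwa [hxez]
  · exfalso
    rw [Metric.mem_ball, Real.dist_eq] at hxz
    exact hεprop z hzZ.1 hzZ.2 x hx.1 hxez hxz hx.2

lemma prod_neg_across_zero {a : ℝ} {φ : ℝ → ℝ} (hc : ContinuousOn φ (Icc a 0))
    {x y zp L ε : ℝ} (hx : x ∈ Icc a 0) (hy : y ∈ Icc a 0)
    (hxz : x < zp) (hzy : zp < y)
    (hz0 : φ zp = 0) (hx0 : φ x ≠ 0) (hy0 : φ y ≠ 0)
    (honly : ∀ t ∈ Ioo x y, φ t = 0 → t = zp)
    (hε : 0 < ε)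
    (hsign : ∀ t ∈ Icc a 0, t ≠ zp → |t - zp| < ε → 0 < φ t * (L * (t - zp))) :
    φ x * φ y < 0 := by
  set x' := (max x (zp - ε) + zp) / 2 with hx'def
  set y' := (zp + min y (zp + ε)) / 2 with hy'def
  have hm1 : max x (zp - ε) < zp := max_lt hxz (by linarith)
  have hm2 : zp < min y (zp + ε) := lt_min hzy (by linarith)
  have hx'1 : max x (zp - ε) < x' := by rw [hx'def]; linarith
  have hx'2 : x' < zp := by rw [hx'def]; linarith
  have hy'1 : zp < y' := by rw [hy'def]; linarith
  have hy'2 : y' < min y (zp + ε) := by rw [hy'def]; linarith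
  have hxx'lt : x < x' := lt_of_le_of_lt (le_max_left _ _) hx'1
  have hy'ylt : y' < y := lt_of_lt_of_le hy'2 (min_le_left _ _)
  have hx'I : x' ∈ Icc a 0 := ⟨le_trans hx.1 hxx'lt.le, le_trans hx'2.le (le_trans hzy.le hy.2)⟩
  have hy'I : y' ∈ Icc a 0 := ⟨le_trans hx.1 (le_trans hxx'lt.le (hx'2.trans hy'1).le), le_trans hy'ylt.le hy.2⟩
  -- sign conditions
  have hsx' : 0 < φ x' * (L * (x' - zp)) := by
    apply hsign x' hx'I hx'2.ne
    rw [abs_lt]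
    constructor
    · have : zp - ε ≤ max x (zp - ε) := le_max_right _ _
      linarith
    · linarith
  have hsy' : 0 < φ y' * (L * (y' - zp)) := by
    apply hsign y' hy'I hy'1.ne'
    rw [abs_lt]
    constructor
    · linarith
    · have : min y (zp + ε) ≤ zp + ε := min_le_right _ _
      linarith
  -- no zeros near the ends
  have hxx' : 0 < φ x * φ x' := by
    apply mul_pos_of_no_zero hc hx hx'I hxx'lt.le
    intro t ht h0
    rcases eq_or_lt_of_le ht.1 with rfl | hlt
    · exact hx0 h0
    · have htIoo : t ∈ Ioo x y := ⟨hlt, lt_of_le_of_lt ht.2 (by linarith)⟩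
      have := honly t htIoo h0
      subst this
      linarith [ht.2]
  have hyy' : 0 < φ y' * φ y := by
    apply mul_pos_of_no_zero hc hy'I hy hy'ylt.le
    intro t ht h0
    rcases eq_or_lt_of_le ht.2 with heq | hlt
    · exact hy0 (heq ▸ h0)
    · have htIoo : t ∈ Ioo x y := ⟨by linarith [ht.1], hlt⟩
      have := honly t htIoo h0
      subst this
      linarith [ht.1]
  -- conclude
  have hq := mul_pos hsx' hsy'
  rw [show (φ x' * (L * (x' - zp))) * (φ y' * (L * (y' - zp)))
      = (φ x' * φ y') * (L ^ 2 * ((x' - zp) * (y' - zp))) from by ring] at hq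
  have hneg : L ^ 2 * ((x' - zp) * (y' - zp)) < 0 := by
    have hL : L ≠ 0 := by
      rintro rfl
      simp at hsx'
    apply mul_neg_of_pos_of_neg (by positivity)
    exact mul_neg_of_neg_of_pos (by linarith) (by linarith)
  have h1 : φ x' * φ y' < 0 := by nlinarith [hq, hneg]
  have hq2 := mul_pos hxx' hyy'
  rw [show (φ x * φ x') * (φ y' * φ y) = (φ x * φ y) * (φ x' * φ y') from by ring] at hq2
  nlinarith [hq2, h1]


lemma le_signChanges' (ψ : ℝ → ℝ) (A : Set ℝ) (k : ℕ) (p : Fin (k + 1) → ℝ)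
    (hmem : ∀ i, p i ∈ A) (hmono : StrictMono p)
    (hprod : ∀ i : Fin k, ψ (p i.castSucc) * ψ (p i.succ) < 0) :
    (k : ℕ∞) ≤ signChanges ψ A := by
  apply le_sSup
  refine ⟨k, rfl, fun i => p i.rev, fun i => hmem _, ?_, ?_⟩
  · intro i j hij
    exact hmono (Fin.rev_lt_rev.mpr hij)
  · intro i
    simp only [Fin.rev_succ, Fin.rev_castSucc]
    exact hprod i.rev

lemma signChanges_le' {a : ℝ} (ψ : ℝ → ℝ) (hc : ContinuousOn ψ (Icc a 0))
    (k : ℕ) (J : Fin k → Set ℝ)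
    (hmem : ∀ x ∈ Icc a 0, ψ x = 0 → ∃ i, x ∈ J i)
    (huniq : ∀ i : Fin k, ∀ x ∈ Icc a 0, ∀ y ∈ Icc a 0,
      x ∈ J i → y ∈ J i → ψ x = 0 → ψ y = 0 → x = y) :
    signChanges ψ (Icc a 0) ≤ (k : ℕ∞) := by
  apply sSup_le
  rintro m ⟨k', rfl, θ, hA, hdec, hprod⟩
  simp only [Nat.cast_le]
  have hdec' : ∀ i j : Fin (k' + 1), i ≤ j → θ j ≤ θ i := by
    intro i j hij
    rcases eq_or_lt_of_le hij with rfl | h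
    · exact le_rfl
    · exact (hdec _ _ h).le
  have hzero : ∀ j : Fin k', ∃ ζ, ζ ∈ Ioo (θ j.succ) (θ j.castSucc) ∧ ψ ζ = 0 := by
    intro j
    have hlt : θ j.succ < θ j.castSucc := hdec _ _ (Fin.castSucc_lt_succ : j.castSucc < j.succ)
    have hsub : Icc (θ j.succ) (θ j.castSucc) ⊆ Icc a 0 :=
      Icc_subset_Icc (hA j.succ).1 (hA j.castSucc).2
    have hcont := hc.mono hsub
    rcases mul_neg_iff.mp (hprod j) with ⟨h1, h2⟩ | ⟨h1, h2⟩
    · obtain ⟨ζ, hζ, hζ0⟩ := intermediate_value_Ioo' hlt.le hcont ⟨h2, h1⟩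
      exact ⟨ζ, hζ, hζ0⟩
    · obtain ⟨ζ, hζ, hζ0⟩ := intermediate_value_Ioo hlt.le hcont ⟨h1, h2⟩
      exact ⟨ζ, hζ, hζ0⟩
  choose ζ hζmem hζ0 using hzero
  have hζI : ∀ j, ζ j ∈ Icc a 0 := fun j =>
    ⟨le_trans (hA j.succ).1 (hζmem j).1.le, le_trans (hζmem j).2.le (hA j.castSucc).2⟩
  have hζdistinct : ∀ {i j : Fin k'}, i < j → ζ j < ζ i := by
    intro i j hij
    have h1 : θ j.castSucc ≤ θ i.succ := by
      apply hdec'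
      simp only [Fin.le_def, Fin.val_succ, Fin.coe_castSucc]
      exact hij
    calc ζ j < θ j.castSucc := (hζmem j).2
      _ ≤ θ i.succ := h1
      _ < ζ i := (hζmem i).1
  have hidx : ∀ j, ∃ i, ζ j ∈ J i := fun j => hmem _ (hζI j) (hζ0 j)
  choose idx hidx using hidx
  have hinj : Function.Injective idx := by
    intro j j' h
    by_contra hne
    have hne' : ζ j ≠ ζ j' := by
      rcases Ne.lt_or_gt hne with hlt | hlt
      · exact (hζdistinct hlt).ne'
      · exact (hζdistinct hlt).ne
    exact hne' (huniq (idx j) _ (hζI j) _ (hζI j') (hidx j) (h ▸ hidx j') (hζ0 j) (hζ0 j'))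
  simpa using Fintype.card_le_of_injective idx hinj

/-- Convergence in `C¹` to a function with only simple zeros, nonvanishing at the
endpoints, eventually preserves the number of sign changes on `[a,0]`. -/
theorem signChanges_eventually_eq (a : ℝ) (ha : a < 0)
    (φ : ℝ → ℝ) (φn : ℕ → ℝ → ℝ)
    (hφ : ContDiffOn ℝ 1 φ (Set.Icc a 0))
    (hφn : ∀ n, ContDiffOn ℝ 1 (φn n) (Set.Icc a 0))
    (hsimple : ∀ s ∈ Set.Icc a 0, φ s = 0 → derivWithin φ (Set.Icc a 0) s ≠ 0)
    (hφ0 : ∃ s ∈ Set.Icc a 0, φ s ≠ 0)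
    (hφn0 : ∀ n, ∃ s ∈ Set.Icc a 0, φn n s ≠ 0)
    (hconv : TendstoUniformlyOn φn φ atTop (Set.Icc a 0))
    (hconv' : TendstoUniformlyOn (fun n => derivWithin (φn n) (Set.Icc a 0))
      (derivWithin φ (Set.Icc a 0)) atTop (Set.Icc a 0))
    (hend1 : φ a ≠ 0) (hend2 : φ 0 ≠ 0) :
    ∀ᶠ n in atTop,
      signChanges (φn n) (Set.Icc a 0) = signChanges φ (Set.Icc a 0) := by
  have hI : UniqueDiffOn ℝ (Icc a 0) := uniqueDiffOn_Icc ha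
  set φ' := derivWithin φ (Set.Icc a 0) with hφ'def
  have hφc : ContinuousOn φ (Icc a 0) := hφ.continuousOn
  have hφ'c : ContinuousOn φ' (Icc a 0) := hφ.continuousOn_derivWithin hI le_rfl
  have hder : ∀ z ∈ Icc a 0, HasDerivWithinAt φ (φ' z) (Icc a 0) z :=
    fun z hz => ((hφ.differentiableOn one_ne_zero) z hz).hasDerivWithinAt
  have hloc : ∀ z ∈ Icc a 0, φ z = 0 → ∃ ε > 0, ∀ x ∈ Icc a 0, x ≠ z → |x - z| < ε →
      0 < φ x * (φ' z * (x - z)) :=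
    fun z hz h0 => exists_sign_near_zero (hder z hz) h0 (hsimple z hz h0)
  have hZfin : {x ∈ Icc a 0 | φ x = 0}.Finite := by
    apply finite_zeros hφc
    intro z hz h0
    obtain ⟨ε, hε, hp⟩ := hloc z hz h0
    refine ⟨ε, hε, fun x hx hxz hxe hx0 => ?_⟩
    have := hp x hx hxz hxe
    rw [hx0] at this
    simp at this
  set k := hZfin.toFinset.card with hk
  set e := hZfin.toFinset.orderIsoOfFin rfl with he
  set z : Fin k → ℝ := fun i => (e i : ℝ) with hzdef
  have hzmono : StrictMono z := by
    intro i j hij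
    have : e i < e j := e.lt_iff_lt.mpr hij
    exact_mod_cast this
  have hzZ : ∀ i, z i ∈ Icc a 0 ∧ φ (z i) = 0 := by
    intro i
    have h := (e i).2
    rw [Set.Finite.mem_toFinset] at h
    exact h
  have hzsurj : ∀ x ∈ Icc a 0, φ x = 0 → ∃ i, z i = x := by
    intro x hx h0
    have hxZ : x ∈ hZfin.toFinset := by rw [Set.Finite.mem_toFinset]; exact ⟨hx, h0⟩
    refine ⟨e.symm ⟨x, hxZ⟩, ?_⟩
    simp [hzdef]
  have hzIoo : ∀ i, z i ∈ Ioo a 0 := by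
    intro i
    obtain ⟨h1, h0⟩ := hzZ i
    refine ⟨lt_of_le_of_ne h1.1 ?_, lt_of_le_of_ne h1.2 ?_⟩
    · intro heq; exact hend1 (heq ▸ h0)
    · intro heq; exact hend2 (heq ▸ h0)
  have hL : ∀ i, φ' (z i) ≠ 0 := fun i => hsimple _ (hzZ i).1 (hzZ i).2
  -- per-zero data: radius η i for the interval, ε i for the sign property
  have hdata : ∀ i : Fin k, ∃ η, 0 < η ∧ ∃ ε, 0 < ε ∧
      Icc (z i - η) (z i + η) ⊆ Ioo a 0 ∧
      (∀ x ∈ Icc (z i - η) (z i + η), |φ' x - φ' (z i)| < |φ' (z i)| / 2) ∧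
      (∀ x ∈ Icc a 0, x ≠ z i → |x - z i| < ε → 0 < φ x * (φ' (z i) * (x - z i))) := by
    intro i
    obtain ⟨ε, hε, hsign⟩ := hloc (z i) (hzZ i).1 (hzZ i).2
    have hcw : ContinuousWithinAt φ' (Icc a 0) (z i) := hφ'c (z i) (hzZ i).1
    have hev : {x | |φ' x - φ' (z i)| < |φ' (z i)| / 2} ∈ 𝓝[Icc a 0] (z i) := by
      have h1 := hcw (Metric.ball_mem_nhds (φ' (z i)) (div_pos (abs_pos.2 (hL i)) two_pos))
      filter_upwards [h1] with u hu
      simpa [Real.dist_eq] using hu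
    obtain ⟨ε', hε', hball⟩ := Metric.mem_nhdsWithin_iff.mp hev
    obtain ⟨ε'', hε'', hball''⟩ := Metric.isOpen_iff.mp isOpen_Ioo (z i) (hzIoo i)
    refine ⟨min (ε' / 2) (ε'' / 2), by positivity, ε, hε, ?_, ?_, hsign⟩
    · intro x hx
      apply hball''
      rw [Metric.mem_ball, Real.dist_eq, abs_lt]
      have h1 := hx.1; have h2 := hx.2
      have : min (ε' / 2) (ε'' / 2) ≤ ε'' / 2 := min_le_right _ _
      constructor <;> linarith
    · intro x hx
      apply hball
      have hxIoo : x ∈ Ioo a 0 := by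
        apply hball''
        rw [Metric.mem_ball, Real.dist_eq, abs_lt]
        have h1 := hx.1; have h2 := hx.2
        have : min (ε' / 2) (ε'' / 2) ≤ ε'' / 2 := min_le_right _ _
        constructor <;> linarith
      refine ⟨?_, Ioo_subset_Icc_self hxIoo⟩
      rw [Metric.mem_ball, Real.dist_eq, abs_lt]
      have h1 := hx.1; have h2 := hx.2
      have : min (ε' / 2) (ε'' / 2) ≤ ε' / 2 := min_le_left _ _
      constructor <;> linarith
  choose η hηpos ε hεpos hJsub hJder hJsign using hdata
  -- the gap skeleton w
  set w : ℕ → ℝ := fun j => if h : j = 0 then a else if h' : j ≤ k then z ⟨j - 1, by omega⟩ else 0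
    with hw
  have hw0 : w 0 = a := by simp [hw]
  have hwlast : w (k + 1) = 0 := by simp [hw]
  have hwval : ∀ j (h1 : 1 ≤ j) (h2 : j ≤ k), w j = z ⟨j - 1, by omega⟩ := by
    intro j h1 h2
    simp only [hw]
    rw [dif_neg (by omega), dif_pos h2]
  have hwz : ∀ i : Fin k, w ((i : ℕ) + 1) = z i := by
    intro i
    rw [hwval ((i : ℕ) + 1) (by omega) (by omega : (i : ℕ) + 1 ≤ k)]
    exact congrArg z (Fin.ext (by simp))
  have hwstep : ∀ j ≤ k, w j < w (j + 1) := by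
    intro j hj
    rcases Nat.eq_zero_or_pos j with rfl | hjpos
    · rcases Nat.eq_zero_or_pos k with hk0 | hkpos
      · have h1 : w 1 = 0 := by simp only [hw]; rw [dif_neg one_ne_zero, dif_neg (by omega)]
        rw [hw0, h1]; exact ha
      · rw [hw0, hwval 1 le_rfl hkpos]
        exact (hzIoo _).1
    · rcases Nat.lt_or_ge j k with hjk | hjk
      · rw [hwval j hjpos hjk.le, hwval (j + 1) (by omega) hjk]
        apply hzmono
        simp only [Fin.lt_def]
        omega
      · have hjk' : j = k := le_antisymm hj hjk
        rw [hwval j hjpos (by omega)]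
        have h1 : w (j + 1) = 0 := by
          simp only [hw]; rw [dif_neg (by omega), dif_neg (by omega)]
        rw [h1]
        exact (hzIoo _).2
  have hwmono : ∀ i j, i ≤ j → j ≤ k + 1 → w i ≤ w j := by
    intro i j hij hjk
    induction j with
    | zero => have : i = 0 := by omega
              rw [this]
    | succ m ih =>
      rcases Nat.lt_or_ge i (m + 1) with h | h
      · exact le_trans (ih (by omega) (by omega)) (hwstep m (by omega)).le
      · have : i = m + 1 := by omega
        rw [this]
  -- midpoints
  set p : Fin (k + 1) → ℝ := fun i => (w i + w ((i : ℕ) + 1)) / 2 with hp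
  have hpIoo : ∀ i : Fin (k + 1), w i < p i ∧ p i < w ((i : ℕ) + 1) := by
    intro i
    have := hwstep i (by omega)
    constructor <;> (simp only [hp]; linarith)
  have hpI : ∀ i, p i ∈ Icc a 0 := by
    intro i
    have h1 : a ≤ w i := by rw [← hw0]; exact hwmono 0 i (Nat.zero_le _) (by omega)
    have h2 : w ((i : ℕ) + 1) ≤ 0 := by rw [← hwlast]; exact hwmono _ _ (by omega) le_rfl
    obtain ⟨ha1, ha2⟩ := hpIoo i
    exact ⟨le_trans h1 ha1.le, le_trans ha2.le h2⟩
  have hpmono : StrictMono p := by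
    intro i j hij
    have h1 : p i < w ((i : ℕ) + 1) := (hpIoo i).2
    have h2 : w ((i : ℕ) + 1) ≤ w j := hwmono _ _ (by exact_mod_cast hij) (by omega)
    have h3 : w j < p j := (hpIoo j).1
    linarith
  have hzero_between : ∀ (i : Fin (k + 1)) (t : Fin k),
      z t ∈ Ioo (w i) (w ((i : ℕ) + 1)) → False := by
    intro i t hmem
    rw [← hwz t] at hmem
    have hlt1 : (i : ℕ) < (t : ℕ) + 1 := by
      by_contra hcon; push_neg at hcon
      have := hwmono ((t : ℕ) + 1) i hcon (by omega)
      linarith [hmem.1]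
    have hlt2 : (t : ℕ) + 1 < (i : ℕ) + 1 := by
      by_contra hcon; push_neg at hcon
      have := hwmono ((i : ℕ) + 1) ((t : ℕ) + 1) hcon (by omega)
      linarith [hmem.2]
    omega
  have hpne : ∀ i, φ (p i) ≠ 0 := by
    intro i h0
    obtain ⟨t, ht⟩ := hzsurj (p i) (hpI i) h0
    apply hzero_between i t
    rw [ht]
    exact ⟨(hpIoo i).1, (hpIoo i).2⟩
  -- products for φ
  have hprodφ : ∀ i : Fin k, φ (p i.castSucc) * φ (p i.succ) < 0 := by
    intro i
    have hc1 : ((i.castSucc : Fin (k + 1)) : ℕ) = (i : ℕ) := rfl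
    have hc2 : ((i.succ : Fin (k + 1)) : ℕ) = (i : ℕ) + 1 := rfl
    have hx1 : p i.castSucc < z i := by
      have := (hpIoo i.castSucc).2
      rw [hc1] at this
      rwa [← hwz i]
    have hx2 : z i < p i.succ := by
      have := (hpIoo i.succ).1
      rw [hc2] at this
      rwa [← hwz i]
    apply prod_neg_across_zero hφc (hpI i.castSucc) (hpI i.succ) hx1 hx2 (hzZ i).2
      (hpne _) (hpne _) ?_ (hεpos i) (hJsign i)
    intro t ht h0
    have htI : t ∈ Icc a 0 :=
      ⟨le_trans (hpI i.castSucc).1 ht.1.le, le_trans ht.2.le (hpI i.succ).2⟩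
    obtain ⟨s, hs⟩ := hzsurj t htI h0
    by_contra hne
    -- z s = t ∈ (p i.castSucc, p i.succ) ⊆ (w i, w (i+2)); t ≠ z i
    have hs1 : w (i : ℕ) < z s := by
      calc w (i : ℕ) < p i.castSucc := by
            have := (hpIoo i.castSucc).1; rwa [hc1] at this
        _ < z s := hs ▸ ht.1
    have hs2 : z s < w ((i : ℕ) + 2) := by
      calc z s < p i.succ := hs ▸ ht.2
        _ < w ((i : ℕ) + 2) := by
            have := (hpIoo i.succ).2; rwa [hc2] at this
    have hlt1 : (i : ℕ) < (s : ℕ) + 1 := by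
      by_contra hcon; push_neg at hcon
      have := hwmono ((s : ℕ) + 1) (i : ℕ) hcon (by omega)
      rw [hwz s] at this
      linarith
    have hlt2 : (s : ℕ) + 1 < (i : ℕ) + 2 := by
      by_contra hcon; push_neg at hcon
      have := hwmono ((i : ℕ) + 2) ((s : ℕ) + 1) hcon (by omega)
      rw [hwz s] at this
      linarith
    have : (s : ℕ) = (i : ℕ) := by omega
    apply hne
    rw [← hs]
    congr 1
    exact Fin.ext this
  have hφeq : signChanges φ (Icc a 0) = (k : ℕ∞) := by
    apply le_antisymm
    · apply signChanges_le' φ hφc k (fun i => {z i})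
      · intro x hx h0
        obtain ⟨i, hi⟩ := hzsurj x hx h0
        exact ⟨i, by simp [hi]⟩
      · intro i x _ y _ hxi hyi _ _
        simp only [mem_singleton_iff] at hxi hyi
        rw [hxi, hyi]
    · exact le_signChanges' φ _ k p hpI hpmono hprodφ
  -- the compact complement K and its minimum
  set K := Icc a 0 \ ⋃ i, Ioo (z i - η i) (z i + η i) with hK
  have hKsub : K ⊆ Icc a 0 := diff_subset
  have hKcomp : IsCompact K := by
    apply isCompact_Icc.of_isClosed_subset _ hKsub
    exact isClosed_Icc.sdiff (isOpen_iUnion fun i => isOpen_Ioo)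
  have hKne : a ∈ K := by
    refine ⟨left_mem_Icc.2 ha.le, ?_⟩
    simp only [mem_iUnion, not_exists]
    intro i hi
    have := hJsub i (Ioo_subset_Icc_self hi)
    exact lt_irrefl a this.1
  obtain ⟨x₀, hx₀K, hx₀min⟩ := hKcomp.exists_isMinOn ⟨a, hKne⟩ ((hφc.mono hKsub).abs)
  have hx₀ne : φ x₀ ≠ 0 := by
    intro h0
    obtain ⟨t, ht⟩ := hzsurj x₀ (hKsub hx₀K) h0
    apply hx₀K.2
    simp only [mem_iUnion]
    exact ⟨t, by rw [ht] at *; constructor <;> [linarith [hηpos t]; linarith [hηpos t]]⟩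
  have hδ : 0 < |φ x₀| := abs_pos.2 hx₀ne
  -- eventual closeness
  have hE1 : ∀ᶠ n in atTop, ∀ x ∈ Icc a 0, dist (φ x) (φn n x) < |φ x₀| :=
    (Metric.tendstoUniformlyOn_iff.mp hconv) _ hδ
  have hE2 : ∀ᶠ n in atTop, ∀ i : Fin k, ∀ x ∈ Icc a 0,
      dist (φ' x) (derivWithin (φn n) (Icc a 0) x) < |φ' (z i)| / 2 := by
    rw [eventually_all]
    intro i
    exact (Metric.tendstoUniformlyOn_iff.mp hconv') _ (div_pos (abs_pos.2 (hL i)) two_pos)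
  have hE3 : ∀ᶠ n in atTop, ∀ i : Fin (k + 1), dist (φ (p i)) (φn n (p i)) < |φ (p i)| := by
    rw [eventually_all]
    intro i
    filter_upwards [(Metric.tendstoUniformlyOn_iff.mp hconv) _ (abs_pos.2 (hpne i))] with n hn
    exact hn (p i) (hpI i)
  filter_upwards [hE1, hE2, hE3] with n h1 h2 h3
  rw [hφeq]
  -- lower bound for φn n
  have hprodn : ∀ i : Fin k, φn n (p i.castSucc) * φn n (p i.succ) < 0 := by
    intro i
    have a1 : 0 < φn n (p i.castSucc) * φ (p i.castSucc) := by
      apply mul_pos_of_abs_sub_lt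
      have := h3 i.castSucc
      rw [Real.dist_eq, abs_sub_comm] at this
      exact this
    have a2 : 0 < φn n (p i.succ) * φ (p i.succ) := by
      apply mul_pos_of_abs_sub_lt
      have := h3 i.succ
      rw [Real.dist_eq, abs_sub_comm] at this
      exact this
    nlinarith [hprodφ i, a1, a2]
  -- upper bound for φn n
  set J : Fin k → Set ℝ := fun i => Icc (z i - η i) (z i + η i) with hJdef
  have hJsubI : ∀ i, J i ⊆ Icc a 0 := fun i => (hJsub i).trans Ioo_subset_Icc_self
  have huniqn : ∀ i : Fin k, ∀ x ∈ Icc a 0, ∀ y ∈ Icc a 0, x ∈ J i → y ∈ J i →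
      φn n x = 0 → φn n y = 0 → x = y := by
    intro i x hx y hy hxJ hyJ hx0 hy0
    have hD : ∀ t ∈ Ioo (z i - η i) (z i + η i),
        deriv (φn n) t = derivWithin (φn n) (Icc a 0) t ∧
        0 < derivWithin (φn n) (Icc a 0) t * φ' (z i) := by
      intro t ht
      have htI : t ∈ Icc a 0 := hJsubI i (Ioo_subset_Icc_self ht)
      have htIoo : t ∈ Ioo a 0 := hJsub i (Ioo_subset_Icc_self ht)
      have hnhds : Icc a 0 ∈ 𝓝 t := Icc_mem_nhds htIoo.1 htIoo.2
      refine ⟨(derivWithin_of_mem_nhds hnhds).symm, ?_⟩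
      have b1 := h2 i t htI
      rw [Real.dist_eq] at b1
      have b2 := hJder i t (Ioo_subset_Icc_self ht)
      apply mul_pos_of_abs_sub_lt
      calc |derivWithin (φn n) (Icc a 0) t - φ' (z i)|
          ≤ |derivWithin (φn n) (Icc a 0) t - φ' t| + |φ' t - φ' (z i)| := abs_sub_le _ _ _
        _ < |φ' (z i)| / 2 + |φ' (z i)| / 2 := by
            rw [abs_sub_comm]
            exact add_lt_add b1 b2
        _ = |φ' (z i)| := by ring
    have hcont : ContinuousOn (φn n) (J i) := (hφn n).continuousOn.mono (hJsubI i)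
    have hinj : InjOn (φn n) (J i) := by
      rcases (hL i).lt_or_gt with hLn | hLp
      · apply (strictAntiOn_of_deriv_neg (convex_Icc _ _) hcont ?_).injOn
        intro t ht
        rw [interior_Icc] at ht
        obtain ⟨heq, hpos⟩ := hD t ht
        rw [heq]
        nlinarith [hpos]
      · apply (strictMonoOn_of_deriv_pos (convex_Icc _ _) hcont ?_).injOn
        intro t ht
        rw [interior_Icc] at ht
        obtain ⟨heq, hpos⟩ := hD t ht
        rw [heq]
        nlinarith [hpos]
    exact hinj hxJ hyJ (hx0.trans hy0.symm)
  have hmemn : ∀ x ∈ Icc a 0, φn n x = 0 → ∃ i, x ∈ J i := by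
    intro x hx h0
    by_contra hcon
    push_neg at hcon
    have hxK : x ∈ K := by
      refine ⟨hx, ?_⟩
      simp only [mem_iUnion, not_exists]
      intro i hi
      exact hcon i (Ioo_subset_Icc_self hi)
    have hmin := isMinOn_iff.mp hx₀min x hxK
    have hclose := h1 x hx
    rw [Real.dist_eq, h0, sub_zero] at hclose
    linarith
  apply le_antisymm
  · exact signChanges_le' (φn n) ((hφn n).continuousOn) k J hmemn huniqn
  · exact le_signChanges' (φn n) _ k p hpI hpmono hprodn
end

section
/- Let f : ℝ × ℝ × ℝ → ℝ be continuous in its first argument and C¹ in the others, satisfying the feedback condition v·f(t, 0, v) > 0 for all t ∈ ℝ and v ≠ 0. Let x, z : I → ℝ be C¹ on an interval I with ẋ(t) = f(t, x(t), z(t)) on I. Define a(t) = ∫₀¹ D₂f(t, h·x(t), z(t)) dh and b(t) = ∫₀¹ D₃f(t, 0, h·z(t)) dh. Then (i) ẋ(t) = a(t)x(t) + b(t)z(t) for all t ∈ I, and (ii) b(t) > 0 for all t ∈ I. -/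
open Set intervalIntegral

private lemma ftc_aux (g : ℝ → ℝ) (hg : ContDiff ℝ 1 g) (X : ℝ) :
    g X = g 0 + (∫ h in (0:ℝ)..1, deriv g (h * X)) * X := by
  have hF : ∀ h : ℝ, HasDerivAt (fun h : ℝ => g (h * X)) (deriv g (h * X) * X) h := by
    intro h
    have h1 : HasDerivAt g (deriv g (h * X)) (h * X) :=
      (hg.differentiable one_ne_zero (h * X)).hasDerivAt
    have h2 : HasDerivAt (fun h : ℝ => h * X) X h := by
      simpa using (hasDerivAt_id h).mul_const X
    exact h1.comp h h2
  have hcont : Continuous fun h : ℝ => deriv g (h * X) :=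
    (hg.continuous_deriv le_rfl).comp (continuous_id.mul continuous_const)
  have key : ∫ h in (0:ℝ)..1, deriv g (h * X) * X = g (1 * X) - g (0 * X) :=
    intervalIntegral.integral_eq_sub_of_hasDerivAt (fun h _ => hF h)
      ((hcont.mul continuous_const).intervalIntegrable 0 1)
  rw [intervalIntegral.integral_mul_const, one_mul, zero_mul] at key
  linarith

/-- Linearization along a solution: writing
`a(t) = ∫₀¹ D₂f(t, h x(t), z(t)) dh` and `b(t) = ∫₀¹ D₃f(t, 0, h z(t)) dh`,
a solution of `ẋ = f(t, x, z)` solves `ẋ = a x + b z`, and `b > 0`. -/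
theorem linearization_along_solution
    (f : ℝ → ℝ → ℝ → ℝ)
    (hft : ∀ u v, Continuous (fun t => f t u v))
    (hfC1 : ∀ t, ContDiff ℝ 1 (fun p : ℝ × ℝ => f t p.1 p.2))
    (hfb : ∀ t v, v ≠ 0 → 0 < v * f t 0 v)
    (hfb' : ∀ t, 0 < deriv (fun v => f t 0 v) 0)
    (I : Set ℝ) (x z : ℝ → ℝ)
    (hz : ContinuousOn z I)
    (hx : ∀ t ∈ I, HasDerivAt x (f t (x t) (z t)) t)
    (a b : ℝ → ℝ)
    (hadef : ∀ t, a t = ∫ h in (0:ℝ)..1, deriv (fun u => f t u (z t)) (h * x t))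
    (hbdef : ∀ t, b t = ∫ h in (0:ℝ)..1, deriv (fun v => f t 0 v) (h * z t)) :
    (∀ t ∈ I, HasDerivAt x (a t * x t + b t * z t) t) ∧
    (∀ t ∈ I, 0 < b t) := by
  -- C¹ of the slices
  have hg1 : ∀ t V, ContDiff ℝ 1 (fun u => f t u V) := fun t V =>
    (hfC1 t).comp (contDiff_id.prodMk contDiff_const)
  have hg2 : ∀ t, ContDiff ℝ 1 (fun v => f t 0 v) := fun t =>
    (hfC1 t).comp (contDiff_const.prodMk contDiff_id)
  -- f t 0 0 = 0
  have hzero : ∀ t, f t 0 0 = 0 := by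
    intro t
    have hdiff : HasDerivAt (fun v : ℝ => v * f t 0 v) (f t 0 0) 0 := by
      have h1 : HasDerivAt (fun v : ℝ => f t 0 v) (deriv (fun v => f t 0 v) 0) 0 :=
        ((hg2 t).differentiable one_ne_zero 0).hasDerivAt
      have : HasDerivAt (fun v : ℝ => v * f t 0 v) _ 0 := (hasDerivAt_id (0:ℝ)).mul h1
      simpa using this
    have hmin : IsLocalMin (fun v : ℝ => v * f t 0 v) 0 := by
      have hmo : IsMinOn (fun v : ℝ => v * f t 0 v) Set.univ 0 := by
        intro v _
        show (0:ℝ) * f t 0 0 ≤ v * f t 0 v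
        rcases eq_or_ne v 0 with rfl | hv
        · simp
        · rw [zero_mul]; exact (hfb t v hv).le
      exact hmo.isLocalMin Filter.univ_mem
    have := hmin.hasDerivAt_eq_zero hdiff
    linarith
  -- key identity
  have hkey : ∀ t, f t (x t) (z t) = a t * x t + b t * z t := by
    intro t
    have h1 := ftc_aux (fun u => f t u (z t)) (hg1 t (z t)) (x t)
    have h2 := ftc_aux (fun v => f t 0 v) (hg2 t) (z t)
    rw [← hadef t] at h1
    rw [← hbdef t, hzero t] at h2
    linarith
  constructor
  · intro t ht
    have := hx t ht
    rwa [hkey t] at this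
  · intro t ht
    rcases eq_or_ne (z t) 0 with hzt | hzt
    · have : b t = deriv (fun v => f t 0 v) 0 := by
        rw [hbdef t, hzt]
        simp
      rw [this]; exact hfb' t
    · have h2 := ftc_aux (fun v => f t 0 v) (hg2 t) (z t)
      rw [← hbdef t, hzero t] at h2
      have hpos := hfb t (z t) hzt
      have hb2 : f t 0 (z t) = b t * z t := by linarith
      rw [hb2] at hpos
      have hsq : 0 < (z t) ^ 2 := by positivity
      nlinarith
end

section
/- Let η : ℝ → ℝ be continuous and strictly increasing with 0 < t − η(t) ≤ r for all t. Suppose y⁰, …, y^N : ℝ → ℝ are C¹ and satisfy ẏ^i(t) = c^i(t)y^{i+1}(t) (0 ≤ i ≤ N−1) and ẏ^N(t) = c^N(t)y⁰(η(t)) for all t, where each c^i (0 ≤ i ≤ N−1) is continuous and nonvanishing and c^N is continuous and nonvanishing. If σ ∈ ℝ is an infinite oscillation point of y⁰ (i.e., there is a strictly monotone sequence t_n → σ with y⁰(t_n)y⁰(t_{n+1}) < 0 for all n), then y^i(σ) = 0 for all 0 ≤ i ≤ N, and η(σ) is also an infinite oscillation point of y⁰. -/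
open Set Filter

/-- `σ` is an infinite oscillation point of `u`: there is a strictly monotone
sequence `t_n → σ` along which `u` keeps changing sign. -/
def IsIOP (u : ℝ → ℝ) (σ : ℝ) : Prop :=
  ∃ t : ℕ → ℝ, (StrictMono t ∨ StrictAnti t) ∧
    Tendsto t atTop (nhds σ) ∧ ∀ n, u (t n) * u (t (n + 1)) < 0

/-- Sign-alternation lemma: if `a*b < 0` and `b*c < 0` then the consecutive
differences also alternate in sign. -/
lemma iop_signs {a b c : ℝ} (h1 : a * b < 0) (h2 : b * c < 0) :
    (b - a) * (c - b) < 0 := by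
  rcases lt_trichotomy b 0 with hb | hb | hb
  · have ha : 0 < a := by nlinarith
    have hc : 0 < c := by nlinarith
    exact mul_neg_of_neg_of_pos (by linarith) (by linarith)
  · rw [hb, mul_zero] at h1; linarith
  · have ha : a < 0 := by nlinarith
    have hc : c < 0 := by nlinarith
    exact mul_neg_of_pos_of_neg (by linarith) (by linarith)

/-- A continuous nonvanishing real function has constant sign. -/
lemma iop_csign {c : ℝ → ℝ} (hc : Continuous c) (hne : ∀ t, c t ≠ 0)
    (a b : ℝ) : 0 < c a * c b := by
  rcases (mul_ne_zero (hne a) (hne b)).lt_or_gt with h | h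
  · exfalso
    have h0 : (0 : ℝ) ∈ uIcc (c a) (c b) := by
      rcases mul_neg_iff.1 h with ⟨h1, h2⟩ | ⟨h1, h2⟩ <;>
        simp [Set.mem_uIcc] <;> [right; left] <;> constructor <;> linarith
    obtain ⟨x, -, hx⟩ := intermediate_value_uIcc (hc.continuousOn (s := uIcc a b)) h0
    exact hne x hx
  · exact h

/-- A continuous function vanishes at any of its infinite oscillation points. -/
lemma iop_zero {u : ℝ → ℝ} {σ : ℝ} (hu : Continuous u) (h : IsIOP u σ) :
    u σ = 0 := by
  obtain ⟨t, -, htt, hsign⟩ := h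
  by_contra h0
  have hlim : Tendsto (fun n => u (t n)) atTop (nhds (u σ)) :=
    (hu.tendsto σ).comp htt
  rcases lt_or_gt_of_ne h0 with h0 | h0
  · have hev : ∀ᶠ n in atTop, u (t n) < 0 := hlim.eventually_lt_const h0
    obtain ⟨M, hM⟩ := eventually_atTop.1 hev
    have h1 := hM M le_rfl
    have h2 := hM (M + 1) (Nat.le_succ M)
    nlinarith [hsign M]
  · have hev : ∀ᶠ n in atTop, 0 < u (t n) := hlim.eventually_const_lt h0
    obtain ⟨M, hM⟩ := eventually_atTop.1 hev
    have h1 := hM M le_rfl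
    have h2 := hM (M + 1) (Nat.le_succ M)
    nlinarith [hsign M]

/-- An IOP of a function is an IOP of (any everywhere-defined) derivative. -/
lemma iop_deriv {u d : ℝ → ℝ} {σ : ℝ} (hd : ∀ t, HasDerivAt u (d t) t)
    (h : IsIOP u σ) : IsIOP d σ := by
  obtain ⟨t, hm, hl, hs⟩ := h
  have hl' : Tendsto (fun n => t (n + 1)) atTop (nhds σ) :=
    hl.comp (tendsto_add_atTop_nat 1)
  rcases hm with hm | hm
  · -- strictly increasing
    have hstep : ∀ n, t n < t (n + 1) := fun n => hm (Nat.lt_succ_self n)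
    have hmvt : ∀ n : ℕ, ∃ ξ ∈ Ioo (t n) (t (n + 1)),
        d ξ = (u (t (n + 1)) - u (t n)) / (t (n + 1) - t n) := fun n =>
      exists_hasDerivAt_eq_slope u d (hstep n)
        (fun x _ => (hd x).continuousAt.continuousWithinAt)
        (fun x _ => hd x)
    choose ξ hmem hval using hmvt
    refine ⟨ξ, Or.inl (strictMono_nat_of_lt_succ fun n =>
        (hmem n).2.trans (hmem (n + 1)).1), ?_, ?_⟩
    · exact tendsto_of_tendsto_of_tendsto_of_le_of_le hl hl'
        (fun n => (hmem n).1.le) (fun n => (hmem n).2.le)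
    · intro n
      rw [hval n, hval (n + 1), div_mul_div_comm]
      refine div_neg_of_neg_of_pos ?_
        (mul_pos (by linarith [hstep n]) (by linarith [hstep (n + 1)]))
      exact iop_signs (hs n) (hs (n + 1))
  · -- strictly decreasing
    have hstep : ∀ n, t (n + 1) < t n := fun n => hm (Nat.lt_succ_self n)
    have hmvt : ∀ n : ℕ, ∃ ξ ∈ Ioo (t (n + 1)) (t n),
        d ξ = (u (t n) - u (t (n + 1))) / (t n - t (n + 1)) := fun n =>
      exists_hasDerivAt_eq_slope u d (hstep n)
        (fun x _ => (hd x).continuousAt.continuousWithinAt)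
        (fun x _ => hd x)
    choose ξ hmem hval using hmvt
    refine ⟨ξ, Or.inr (strictAnti_nat_of_succ_lt fun n =>
        (hmem (n + 1)).2.trans (hmem n).1), ?_, ?_⟩
    · exact tendsto_of_tendsto_of_tendsto_of_le_of_le hl' hl
        (fun n => (hmem n).1.le) (fun n => (hmem n).2.le)
    · intro n
      rw [hval n, hval (n + 1), div_mul_div_comm]
      refine div_neg_of_neg_of_pos ?_
        (mul_pos (by linarith [hstep n]) (by linarith [hstep (n + 1)]))
      have := iop_signs (mul_comm (u (t (n + 1))) (u (t (n + 2))) ▸ hs (n + 1))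
        (mul_comm (u (t n)) (u (t (n + 1))) ▸ hs n)
      nlinarith [this]

/-- Strip a continuous nonvanishing factor from an IOP. -/
lemma iop_strip {c v : ℝ → ℝ} {σ : ℝ} (hc : Continuous c)
    (hne : ∀ t, c t ≠ 0) (h : IsIOP (fun t => c t * v t) σ) : IsIOP v σ := by
  obtain ⟨t, hm, hl, hs⟩ := h
  refine ⟨t, hm, hl, fun n => ?_⟩
  have hpos := iop_csign hc hne (t n) (t (n + 1))
  have h1 : c (t n) * v (t n) * (c (t (n + 1)) * v (t (n + 1))) < 0 := hs n
  nlinarith [hpos, h1]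

/-- Move an IOP through a continuous strictly monotone change of variables. -/
lemma iop_comp {u η : ℝ → ℝ} {σ : ℝ} (hηc : Continuous η) (hηm : StrictMono η)
    (h : IsIOP (fun t => u (η t)) σ) : IsIOP u (η σ) := by
  obtain ⟨t, hm, hl, hs⟩ := h
  refine ⟨fun n => η (t n), ?_, (hηc.tendsto σ).comp hl, fun n => hs n⟩
  rcases hm with hm | hm
  · exact Or.inl (hηm.comp hm)
  · exact Or.inr (hηm.comp_strictAnti hm)

/-- An infinite oscillation point of `y⁰` forces all components of the cyclic
linear delay system to vanish there, and `η(σ)` is again an infinite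
oscillation point of `y⁰`. -/
theorem iop_propagates (N : ℕ) (η : ℝ → ℝ)
    (hηc : Continuous η) (hηm : StrictMono η) (r : ℝ)
    (hητ : ∀ t, 0 < t - η t ∧ t - η t ≤ r)
    (y c : Fin (N + 1) → ℝ → ℝ)
    (hc : ∀ i, Continuous (c i)) (hcne : ∀ i t, c i t ≠ 0)
    (hsys : ∀ t : ℝ, ∀ i : Fin N,
      HasDerivAt (y i.castSucc) (c i.castSucc t * y i.succ t) t)
    (hsysN : ∀ t : ℝ, HasDerivAt (y (Fin.last N)) (c (Fin.last N) t * y 0 (η t)) t)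
    (σ : ℝ) (hσ : IsIOP (y 0) σ) :
    (∀ i, y i σ = 0) ∧ IsIOP (y 0) (η σ) := by
  have hderiv : ∀ i : Fin (N + 1), ∃ d : ℝ → ℝ, ∀ t, HasDerivAt (y i) (d t) t := by
    intro i
    induction i using Fin.lastCases with
    | last => exact ⟨_, fun t => hsysN t⟩
    | cast j => exact ⟨_, fun t => hsys t j⟩
  have hcont : ∀ i, Continuous (y i) := by
    intro i
    obtain ⟨d, hd⟩ := hderiv i
    exact continuous_iff_continuousAt.2 fun t => (hd t).differentiableAt.continuousAt
  have hIOP : ∀ i : Fin (N + 1), IsIOP (y i) σ := by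
    intro i
    induction i using Fin.induction with
    | zero => exact hσ
    | succ j ih =>
        exact iop_strip (hc j.castSucc) (hcne j.castSucc)
          (iop_deriv (fun t => hsys t j) ih)
  have hlast : IsIOP (fun t => y 0 (η t)) σ :=
    iop_strip (hc (Fin.last N)) (hcne (Fin.last N))
      (iop_deriv (fun t => hsysN t) (hIOP (Fin.last N)))
  exact ⟨fun i => iop_zero (hcont i) (hIOP i), iop_comp hηc hηm hlast⟩
end

section
/- Let u : I → ℝ be C¹ on an interval I and let σ ∈ I be an accumulation point of a strictly monotone sequence (t_n) in I with t_n → σ and u(t_n)u(t_{n+1}) < 0 for all n. Then there exists a strictly monotone sequence (s_n) in I with s_n → σ and u'(s_n)u'(s_{n+1}) < 0 for all n; moreover u(σ) = 0 and u'(σ) = 0. -/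
open Set Filter

/-- MVT step: between two points where `u` has opposite signs, there is a point where
`u'` has the sign of `u` at the right endpoint. -/
lemma iop_step (I : Set ℝ) (hI : I.OrdConnected) (u u' : ℝ → ℝ)
    (hderiv : ∀ t ∈ I, HasDerivAt u (u' t) t)
    (x y : ℝ) (hx : x ∈ I) (hy : y ∈ I) (hxy : x < y) (hsign : u x * u y < 0) :
    ∃ a, a ∈ Ioo x y ∧ a ∈ I ∧ 0 < u' a * u y := by
  have hsub : Icc x y ⊆ I := hI.out hx hy
  have hcu : ContinuousOn u (Icc x y) := fun z hz =>
    ((hderiv z (hsub hz)).continuousAt).continuousWithinAt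
  have hux : u x ≠ 0 := by intro h; rw [h] at hsign; simp at hsign
  have huy : u y ≠ 0 := by intro h; rw [h] at hsign; simp at hsign
  have hz : ∃ z ∈ Ioo x y, u z = 0 := by
    rcases lt_or_gt_of_ne hux with h | h
    · have hy0 : 0 < u y := by nlinarith
      obtain ⟨z, hz, hz0⟩ := intermediate_value_Ioo hxy.le hcu
        (show (0:ℝ) ∈ Ioo (u x) (u y) from ⟨h, hy0⟩)
      exact ⟨z, hz, hz0⟩
    · have hy0 : u y < 0 := by nlinarith
      obtain ⟨z, hz, hz0⟩ := intermediate_value_Ioo' hxy.le hcu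
        (show (0:ℝ) ∈ Ioo (u y) (u x) from ⟨hy0, h⟩)
      exact ⟨z, hz, hz0⟩
  obtain ⟨z, hzmem, hz0⟩ := hz
  have hzy : z < y := hzmem.2
  have hcu2 : ContinuousOn u (Icc z y) := hcu.mono (Icc_subset_Icc hzmem.1.le le_rfl)
  have hd2 : ∀ w ∈ Ioo z y, HasDerivAt u (u' w) w := fun w hw =>
    hderiv w (hsub ⟨(hzmem.1.trans hw.1).le, hw.2.le⟩)
  obtain ⟨a, ha, haeq⟩ := exists_hasDerivAt_eq_slope u u' hzy hcu2 hd2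
  refine ⟨a, ⟨hzmem.1.trans ha.1, ha.2⟩, hsub ⟨(hzmem.1.trans ha.1).le, ha.2.le⟩, ?_⟩
  rw [haeq, hz0, sub_zero]
  have hpos : 0 < y - z := sub_pos.mpr hzy
  rw [div_mul_eq_mul_div]
  exact div_pos (mul_self_pos.mpr huy) hpos

/-- The mean value theorem step: infinite oscillation of a `C¹` function at `σ`
produces infinite oscillation of its derivative at `σ`, and both vanish there. -/
theorem iop_of_deriv (I : Set ℝ) (hI : I.OrdConnected)
    (u u' : ℝ → ℝ)
    (hderiv : ∀ t ∈ I, HasDerivAt u (u' t) t)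
    (hcont : ContinuousOn u' I)
    (σ : ℝ) (hσ : σ ∈ I)
    (t : ℕ → ℝ) (htI : ∀ n, t n ∈ I)
    (hmono : StrictMono t ∨ StrictAnti t)
    (hlim : Tendsto t atTop (nhds σ))
    (hosc : ∀ n, u (t n) * u (t (n + 1)) < 0) :
    (∃ s : ℕ → ℝ, (∀ n, s n ∈ I) ∧ (StrictMono s ∨ StrictAnti s) ∧
      Tendsto s atTop (nhds σ) ∧ ∀ n, u' (s n) * u' (s (n + 1)) < 0) ∧
    u σ = 0 ∧ u' σ = 0 := by
  have hlim' : Tendsto (fun n => t (n + 1)) atTop (nhds σ) :=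
    hlim.comp (tendsto_add_atTop_nat 1)
  -- u σ = 0
  have huσ : u σ = 0 := by
    have hcuσ : ContinuousAt u σ := (hderiv σ hσ).continuousAt
    have h1 : Tendsto (fun n => u (t n) * u (t (n + 1))) atTop (nhds (u σ * u σ)) :=
      ((hcuσ.tendsto.comp hlim).mul (hcuσ.tendsto.comp hlim'))
    have h2 : u σ * u σ ≤ 0 :=
      le_of_tendsto h1 (Eventually.of_forall fun n => (hosc n).le)
    nlinarith [mul_self_nonneg (u σ)]
  -- construct s, handling the two monotonicity cases
  have key : ∃ s : ℕ → ℝ, (∀ n, s n ∈ I) ∧ (StrictMono s ∨ StrictAnti s) ∧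
      Tendsto s atTop (nhds σ) ∧ ∀ n, u' (s n) * u' (s (n + 1)) < 0 := by
    rcases hmono with hm | hm
    · have H : ∀ n, ∃ a, a ∈ Ioo (t n) (t (n + 1)) ∧ a ∈ I ∧ 0 < u' a * u (t (n + 1)) :=
        fun n => iop_step I hI u u' hderiv (t n) (t (n + 1)) (htI n) (htI (n + 1))
          (hm (Nat.lt_succ_self n)) (hosc n)
      choose a ha haI hsgn using H
      refine ⟨a, haI, Or.inl ?_, ?_, ?_⟩
      · exact strictMono_nat_of_lt_succ fun n => (ha n).2.trans (ha (n + 1)).1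
      · exact tendsto_of_tendsto_of_tendsto_of_le_of_le hlim hlim'
          (fun n => (ha n).1.le) (fun n => (ha n).2.le)
      · intro n
        have p1 := hsgn n
        have p2 := hsgn (n + 1)
        have q := hosc (n + 1)
        nlinarith [mul_pos p1 p2]
    · have H : ∀ n, ∃ a, a ∈ Ioo (t (n + 1)) (t n) ∧ a ∈ I ∧ 0 < u' a * u (t n) :=
        fun n => iop_step I hI u u' hderiv (t (n + 1)) (t n) (htI (n + 1)) (htI n)
          (hm (Nat.lt_succ_self n)) (by rw [mul_comm]; exact hosc n)
      choose a ha haI hsgn using H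
      refine ⟨a, haI, Or.inr ?_, ?_, ?_⟩
      · exact strictAnti_nat_of_succ_lt fun n => (ha (n + 1)).2.trans (ha n).1
      · exact tendsto_of_tendsto_of_tendsto_of_le_of_le hlim' hlim
          (fun n => (ha n).1.le) (fun n => (ha n).2.le)
      · intro n
        have p1 := hsgn n
        have p2 := hsgn (n + 1)
        have q := hosc n
        nlinarith [mul_pos p1 p2]
  obtain ⟨s, hsI, hsm, hslim, hsosc⟩ := key
  refine ⟨⟨s, hsI, hsm, hslim, hsosc⟩, huσ, ?_⟩
  -- u' σ = 0
  have hcv : Tendsto (fun n => u' (s n)) atTop (nhds (u' σ)) :=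
    ((hcont σ hσ).tendsto).comp
      (tendsto_nhdsWithin_of_tendsto_nhds_of_eventually_within s hslim
        (Eventually.of_forall hsI))
  have hcv' : Tendsto (fun n => u' (s (n + 1))) atTop (nhds (u' σ)) :=
    hcv.comp (tendsto_add_atTop_nat 1)
  have h1 : Tendsto (fun n => u' (s n) * u' (s (n + 1))) atTop (nhds (u' σ * u' σ)) :=
    hcv.mul hcv'
  have h2 : u' σ * u' σ ≤ 0 :=
    le_of_tendsto h1 (Eventually.of_forall fun n => (hsosc n).le)
  nlinarith [mul_self_nonneg (u' σ)]
end

section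
/- Under the setup of the implicit two-value delay: R : ℝ^{N+1} × ℝ → (0, r] Lipschitz with constants L_{R1} (vector argument) and L_{R2} (scalar argument), L_{R2}L₀ < 1, and τ(u, φ) defined as the unique fixed point of s ↦ R(u, φ(−s)) for u ∈ ℝ^{N+1} and L₀-Lipschitz φ : [-r,0] → ℝ. Then for all u, v ∈ ℝ^{N+1} and L₀-Lipschitz φ, ψ, one has |τ(u, φ) − τ(v, ψ)| ≤ (L_{R1}‖u − v‖_∞ + L_{R2}‖φ − ψ‖_∞ ) / (1 − L_{R2}L₀) + (L_{R2}L₀/(1 − L_{R2}L₀))·0, i.e., |τ(u, φ) − τ(v, ψ)| ≤ (L_{R1} + L_{R2})·max(‖u − v‖_∞, ‖φ − ψ‖_∞) / (1 − L_{R2}L₀). -/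
open Set

/-- Lipschitz estimate for the implicit two-value delay, as a function of the
present value vector and the history segment. -/
theorem implicit_delay_lipschitz (N : ℕ) (r L0 LR1 LR2 : ℝ)
    (hr : 0 < r) (hL0 : 0 < L0) (hLR1 : 0 ≤ LR1) (hLR2 : 0 ≤ LR2)
    (hsmall : LR2 * L0 < 1)
    (R : (Fin (N + 1) → ℝ) → ℝ → ℝ)
    (hRmem : ∀ u y, R u y ∈ Set.Ioc 0 r)
    (hRLip1 : ∀ u v : Fin (N + 1) → ℝ, ∀ y : ℝ, |R u y - R v y| ≤ LR1 * ‖u - v‖)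
    (hRLip2 : ∀ u : Fin (N + 1) → ℝ, ∀ y₁ y₂ : ℝ, |R u y₁ - R u y₂| ≤ LR2 * |y₁ - y₂|)
    (φ ψ : ℝ → ℝ)
    (hφ : ∀ s₁ ∈ Set.Icc (-r) 0, ∀ s₂ ∈ Set.Icc (-r) 0, |φ s₁ - φ s₂| ≤ L0 * |s₁ - s₂|)
    (hψ : ∀ s₁ ∈ Set.Icc (-r) 0, ∀ s₂ ∈ Set.Icc (-r) 0, |ψ s₁ - ψ s₂| ≤ L0 * |s₁ - s₂|)
    (u v : Fin (N + 1) → ℝ) (τ₁ τ₂ : ℝ)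
    (hτ₁ : τ₁ ∈ Set.Ioc 0 r ∧ R u (φ (-τ₁)) = τ₁)
    (hτ₂ : τ₂ ∈ Set.Ioc 0 r ∧ R v (ψ (-τ₂)) = τ₂) :
    |τ₁ - τ₂| ≤ (LR1 + LR2) *
      max ‖u - v‖ (⨆ s : Set.Icc (-r) (0:ℝ), |φ ↑s - ψ ↑s|) / (1 - LR2 * L0) := by
  obtain ⟨hm1, he1⟩ := hτ₁
  obtain ⟨hm2, he2⟩ := hτ₂
  have ht1 : -τ₁ ∈ Set.Icc (-r) 0 := ⟨by linarith [hm1.2], by linarith [hm1.1]⟩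
  have ht2 : -τ₂ ∈ Set.Icc (-r) 0 := ⟨by linarith [hm2.2], by linarith [hm2.1]⟩
  set M : ℝ := ⨆ s : Set.Icc (-r) (0:ℝ), |φ ↑s - ψ ↑s| with hM
  have hbdd : BddAbove (Set.range (fun s : Set.Icc (-r) (0:ℝ) => |φ ↑s - ψ ↑s|)) := by
    refine ⟨L0 * r + |φ (-τ₂) - ψ (-τ₂)| + L0 * r, ?_⟩
    rintro x ⟨s, rfl⟩
    have h1 : |φ ↑s - φ (-τ₂)| ≤ L0 * r := by
      calc |φ ↑s - φ (-τ₂)| ≤ L0 * |(s : ℝ) - (-τ₂)| := hφ _ s.2 _ ht2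
        _ ≤ L0 * r := by
          refine mul_le_mul_of_nonneg_left ?_ hL0.le
          rw [abs_le]; constructor <;> [nlinarith [s.2.1, s.2.2, hm2.1, hm2.2];
            nlinarith [s.2.1, s.2.2, hm2.1, hm2.2]]
    have h2 : |ψ (-τ₂) - ψ ↑s| ≤ L0 * r := by
      calc |ψ (-τ₂) - ψ ↑s| ≤ L0 * |(-τ₂) - (s : ℝ)| := hψ _ ht2 _ s.2
        _ ≤ L0 * r := by
          refine mul_le_mul_of_nonneg_left ?_ hL0.le
          rw [abs_le]; constructor <;> [nlinarith [s.2.1, s.2.2, hm2.1, hm2.2];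
            nlinarith [s.2.1, s.2.2, hm2.1, hm2.2]]
    calc |φ ↑s - ψ ↑s| ≤ |φ ↑s - φ (-τ₂)| + |φ (-τ₂) - ψ (-τ₂)| + |ψ (-τ₂) - ψ ↑s| := by
          have := abs_sub_le (φ (s:ℝ)) (φ (-τ₂)) (ψ (s:ℝ))
          have := abs_sub_le (φ (-τ₂)) (ψ (-τ₂)) (ψ (s:ℝ))
          linarith
      _ ≤ L0 * r + |φ (-τ₂) - ψ (-τ₂)| + L0 * r := by linarith
  have hMle : |φ (-τ₂) - ψ (-τ₂)| ≤ M :=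
    le_ciSup hbdd (⟨-τ₂, ht2⟩ : Set.Icc (-r) (0:ℝ))
  have key : |τ₁ - τ₂| ≤ LR1 * ‖u - v‖ + LR2 * L0 * |τ₁ - τ₂| + LR2 * M := by
    have h1 : |R u (φ (-τ₁)) - R v (φ (-τ₁))| ≤ LR1 * ‖u - v‖ := hRLip1 u v _
    have h2 : |R v (φ (-τ₁)) - R v (φ (-τ₂))| ≤ LR2 * L0 * |τ₁ - τ₂| := by
      calc |R v (φ (-τ₁)) - R v (φ (-τ₂))| ≤ LR2 * |φ (-τ₁) - φ (-τ₂)| := hRLip2 v _ _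
        _ ≤ LR2 * (L0 * |(-τ₁) - (-τ₂)|) :=
            mul_le_mul_of_nonneg_left (hφ _ ht1 _ ht2) hLR2
        _ = LR2 * L0 * |τ₁ - τ₂| := by rw [mul_assoc]; congr 1; rw [← abs_neg]; ring_nf
    have h3 : |R v (φ (-τ₂)) - R v (ψ (-τ₂))| ≤ LR2 * M := by
      calc |R v (φ (-τ₂)) - R v (ψ (-τ₂))| ≤ LR2 * |φ (-τ₂) - ψ (-τ₂)| := hRLip2 v _ _
        _ ≤ LR2 * M := mul_le_mul_of_nonneg_left hMle hLR2
    calc |τ₁ - τ₂| = |R u (φ (-τ₁)) - R v (ψ (-τ₂))| := by rw [he1, he2]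
      _ ≤ |R u (φ (-τ₁)) - R v (φ (-τ₁))| + |R v (φ (-τ₁)) - R v (φ (-τ₂))|
          + |R v (φ (-τ₂)) - R v (ψ (-τ₂))| := by
        have := abs_sub_le (R u (φ (-τ₁))) (R v (φ (-τ₁))) (R v (ψ (-τ₂)))
        have := abs_sub_le (R v (φ (-τ₁))) (R v (φ (-τ₂))) (R v (ψ (-τ₂)))
        linarith
      _ ≤ _ := by linarith
  have hpos : 0 < 1 - LR2 * L0 := by linarith
  rw [le_div_iff₀ hpos]
  have hmax1 : ‖u - v‖ ≤ max ‖u - v‖ M := le_max_left _ _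
  have hmax2 : M ≤ max ‖u - v‖ M := le_max_right _ _
  nlinarith [key, mul_nonneg hLR1 (norm_nonneg (u - v)),
    mul_nonneg hLR2 ((abs_nonneg _).trans hMle)]
end

section
/- Let r > 0, L₀ > 0, and R : ℝ^{N+1} × ℝ → (0, r] be Lipschitz with constants L_{R1}, L_{R2} satisfying (L_{R1} + 2L_{R2})/(1) < 1/L₀, in particular (L_{R1} + L_{R2})L₀/(1 − L_{R2}L₀) < 1. Let x : ℝ → ℝ^{N+1} be such that each component is L₀-Lipschitz, and define τ(t) as the unique fixed point of s ↦ R(x(t), x⁰(t − s)) and η(t) = t − τ(t). Then η is strictly increasing on ℝ. -/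
open Set

/-- For the implicit two-value state-dependent delay along a Lipschitz solution,
the delayed time `η(t) = t − τ(t)` is strictly increasing. -/
theorem implicit_delay_eta_strictMono (N : ℕ) (r L0 LR1 LR2 : ℝ)
    (hr : 0 < r) (hL0 : 0 < L0) (hLR1 : 0 ≤ LR1) (hLR2 : 0 ≤ LR2)
    (hsmall : LR1 + 2 * LR2 < 1 / L0)
    (R : (Fin (N + 1) → ℝ) → ℝ → ℝ)
    (hRmem : ∀ u y, R u y ∈ Set.Ioc 0 r)
    (hRLip1 : ∀ u v : Fin (N + 1) → ℝ, ∀ y : ℝ, |R u y - R v y| ≤ LR1 * ‖u - v‖)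
    (hRLip2 : ∀ u : Fin (N + 1) → ℝ, ∀ y₁ y₂ : ℝ, |R u y₁ - R u y₂| ≤ LR2 * |y₁ - y₂|)
    (x : ℝ → Fin (N + 1) → ℝ)
    (hx : ∀ i : Fin (N + 1), ∀ s t : ℝ, |x s i - x t i| ≤ L0 * |s - t|)
    (τ : ℝ → ℝ)
    (hτ : ∀ t, τ t ∈ Set.Ioc 0 r ∧ R (x t) (x (t - τ t) 0) = τ t) :
    StrictMono (fun t => t - τ t) := by
  have hL0' : (0:ℝ) < 1 / L0 := by positivity
  have hmul : (LR1 + 2 * LR2) * L0 < 1 := by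
    have h := mul_lt_mul_of_pos_right hsmall hL0
    rwa [one_div_mul_cancel hL0.ne'] at h
  have hL2 : LR2 * L0 < 1 := by nlinarith
  -- key Lipschitz estimate for τ
  have key : ∀ s t : ℝ, (1 - LR2 * L0) * |τ t - τ s| ≤ (LR1 + LR2) * L0 * |t - s| := by
    intro s t
    have ht := hτ t
    have hs := hτ s
    have hnorm : ‖x t - x s‖ ≤ L0 * |t - s| := by
      apply pi_norm_le_iff_of_nonneg (by positivity) |>.mpr
      intro i
      simpa [Real.norm_eq_abs] using hx i t s
    have h1 : |R (x t) (x (t - τ t) 0) - R (x s) (x (t - τ t) 0)| ≤ LR1 * (L0 * |t - s|) := by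
      refine (hRLip1 (x t) (x s) _).trans ?_
      exact mul_le_mul_of_nonneg_left hnorm hLR1
    have h2 : |R (x s) (x (t - τ t) 0) - R (x s) (x (s - τ s) 0)| ≤
        LR2 * (L0 * (|t - s| + |τ t - τ s|)) := by
      refine (hRLip2 (x s) _ _).trans ?_
      refine mul_le_mul_of_nonneg_left ?_ hLR2
      refine (hx 0 (t - τ t) (s - τ s)).trans ?_
      refine mul_le_mul_of_nonneg_left ?_ hL0.le
      calc |t - τ t - (s - τ s)| = |(t - s) - (τ t - τ s)| := by ring_nf
        _ ≤ |t - s| + |τ t - τ s| := abs_sub _ _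
    have heq : τ t - τ s = (R (x t) (x (t - τ t) 0) - R (x s) (x (t - τ t) 0)) +
        (R (x s) (x (t - τ t) 0) - R (x s) (x (s - τ s) 0)) := by
      rw [ht.2, hs.2]; ring
    have habs : |τ t - τ s| ≤ LR1 * (L0 * |t - s|) + LR2 * (L0 * (|t - s| + |τ t - τ s|)) := by
      have h3 := (abs_add_le (R (x t) (x (t - τ t) 0) - R (x s) (x (t - τ t) 0))
        (R (x s) (x (t - τ t) 0) - R (x s) (x (s - τ s) 0))).trans (add_le_add h1 h2)
      rwa [← heq] at h3
    nlinarith [abs_nonneg (τ t - τ s), abs_nonneg (t - s)]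
  intro s t hst
  simp only
  have hk := key s t
  have habs : τ t - τ s ≤ |τ t - τ s| := le_abs_self _
  have hts : |t - s| = t - s := abs_of_pos (by linarith)
  rw [hts] at hk
  nlinarith [abs_nonneg (τ t - τ s)]
end

section
/- Let L > 0, C > 0, r > 0, let η : ℝ → ℝ be such that every iterate η^k is L-Lipschitz, and let σ ∈ ℝ. Suppose z_k : [0, r] → ℝ^{N+1} (k ∈ ℕ) are continuous functions, uniformly bounded, with z_k(0) = 0 for all k, satisfying for all t ∈ [0, r] and all k: |z_k^i(t)| ≤ C·L·∫₀^t (|z_k^i(s)| + |z_k^{i+1}(s)|) ds for 0 ≤ i ≤ N−1, and |z_k^N(t)| ≤ C·L·∫₀^t (|z_k^N(s)| + |z_{k+1}^0(s)|) ds. Then z_k(t) = 0 for all k ∈ ℕ and all t ∈ [0, r]. -/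
open Set intervalIntegral

/-- The infinite-dimensional Gronwall argument: a uniformly bounded sequence of
continuous vector functions vanishing at `0` and satisfying the coupled
integral inequalities must vanish identically. -/
theorem infinite_gronwall (N : ℕ) (L C r : ℝ)
    (hL : 0 < L) (hC : 0 < C) (hr : 0 < r)
    (η : ℝ → ℝ) (σ : ℝ)
    (hη : ∀ k : ℕ, ∀ s t : ℝ, |η^[k] t - η^[k] s| ≤ L * |t - s|)
    (z : ℕ → ℝ → Fin (N + 1) → ℝ)
    (hzc : ∀ k, ∀ i : Fin (N + 1), ContinuousOn (fun t => z k t i) (Set.Icc 0 r))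
    (hbdd : ∃ M : ℝ, ∀ k, ∀ t ∈ Set.Icc 0 r, ∀ i : Fin (N + 1), |z k t i| ≤ M)
    (hz0 : ∀ k, ∀ i : Fin (N + 1), z k 0 i = 0)
    (hineq : ∀ k, ∀ t ∈ Set.Icc 0 r, ∀ i : Fin N,
      |z k t i.castSucc| ≤
        C * L * ∫ s in (0:ℝ)..t, (|z k s i.castSucc| + |z k s i.succ|))
    (hineqN : ∀ k, ∀ t ∈ Set.Icc 0 r,
      |z k t (Fin.last N)| ≤
        C * L * ∫ s in (0:ℝ)..t, (|z k s (Fin.last N)| + |z (k + 1) s 0|)) :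
    ∀ k, ∀ t ∈ Set.Icc 0 r, ∀ i : Fin (N + 1), z k t i = 0 := by
  obtain ⟨M, hM⟩ := hbdd
  have hM0 : 0 ≤ M := le_trans (abs_nonneg _) (hM 0 0 (Set.mem_Icc.mpr ⟨le_rfl, hr.le⟩) 0)
  -- main induction
  have key : ∀ n : ℕ, ∀ k, ∀ t ∈ Set.Icc 0 r, ∀ i : Fin (N + 1),
      |z k t i| ≤ M * (2 * C * L) ^ n * t ^ n / n.factorial := by
    intro n
    induction n with
    | zero => intro k t ht i; simpa using hM k t ht i
    | succ n ih =>
      -- common step for an integral of two bounded functions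
      have step : ∀ (k₁ k₂ : ℕ) (i₁ i₂ : Fin (N + 1)), ∀ t ∈ Set.Icc 0 r,
          C * L * (∫ s in (0:ℝ)..t, (|z k₁ s i₁| + |z k₂ s i₂|)) ≤
            M * (2 * C * L) ^ (n + 1) * t ^ (n + 1) / (n + 1).factorial := by
        intro k₁ k₂ i₁ i₂ t ht
        obtain ⟨ht0, htr⟩ := Set.mem_Icc.mp ht
        have hsub : Set.uIcc (0:ℝ) t ⊆ Set.Icc 0 r := by
          rw [Set.uIcc_of_le ht0]
          exact Set.Icc_subset_Icc le_rfl htr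
        have hint1 : IntervalIntegrable (fun s => |z k₁ s i₁| + |z k₂ s i₂|)
            MeasureTheory.volume 0 t := by
          apply ContinuousOn.intervalIntegrable
          exact (((hzc k₁ i₁).mono hsub).abs).add (((hzc k₂ i₂).mono hsub).abs)
        have hint2 : IntervalIntegrable
            (fun s => 2 * (M * (2 * C * L) ^ n) / n.factorial * s ^ n)
            MeasureTheory.volume 0 t := by
          apply ContinuousOn.intervalIntegrable
          exact (continuousOn_const.mul (continuousOn_pow n))
        have hmono : (∫ s in (0:ℝ)..t, (|z k₁ s i₁| + |z k₂ s i₂|)) ≤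
            ∫ s in (0:ℝ)..t, 2 * (M * (2 * C * L) ^ n) / n.factorial * s ^ n := by
          apply intervalIntegral.integral_mono_on ht0 hint1 hint2
          intro s hs
          have hs' : s ∈ Set.Icc 0 r := Set.mem_Icc.mpr ⟨(Set.mem_Icc.mp hs).1, (Set.mem_Icc.mp hs).2.trans htr⟩
          have h1 := ih k₁ s hs' i₁
          have h2 := ih k₂ s hs' i₂
          have : |z k₁ s i₁| + |z k₂ s i₂| ≤
              2 * (M * (2 * C * L) ^ n * s ^ n / n.factorial) := by linarith
          calc |z k₁ s i₁| + |z k₂ s i₂|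
              ≤ 2 * (M * (2 * C * L) ^ n * s ^ n / n.factorial) := this
            _ = 2 * (M * (2 * C * L) ^ n) / n.factorial * s ^ n := by ring
        have hval : (∫ s in (0:ℝ)..t, 2 * (M * (2 * C * L) ^ n) / n.factorial * s ^ n)
            = 2 * (M * (2 * C * L) ^ n) / n.factorial * (t ^ (n + 1) / (n + 1)) := by
          rw [intervalIntegral.integral_const_mul, integral_pow]
          ring
        have hCL : 0 < C * L := mul_pos hC hL
        calc C * L * (∫ s in (0:ℝ)..t, (|z k₁ s i₁| + |z k₂ s i₂|))
            ≤ C * L * (2 * (M * (2 * C * L) ^ n) / n.factorial * (t ^ (n + 1) / (n + 1))) := by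
              rw [← hval]; exact mul_le_mul_of_nonneg_left hmono hCL.le
          _ = M * (2 * C * L) ^ (n + 1) * t ^ (n + 1) / (n + 1).factorial := by
              have hfac : ((n + 1).factorial : ℝ) = (n + 1) * n.factorial := by
                rw [Nat.factorial_succ]; push_cast; ring
              have h1 : (n.factorial : ℝ) ≠ 0 := Nat.cast_ne_zero.mpr n.factorial_ne_zero
              have h2 : ((n:ℝ) + 1) ≠ 0 := by positivity
              rw [hfac]
              field_simp
              ring
      intro k t ht i
      refine Fin.lastCases ?_ ?_ i
      · exact (hineqN k t ht).trans (step k (k + 1) (Fin.last N) 0 t ht)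
      · intro j
        exact (hineq k t ht j).trans (step k k j.castSucc j.succ t ht)
  intro k t ht i
  have habs : |z k t i| ≤ 0 := by
    have htend : Filter.Tendsto (fun n : ℕ => M * (2 * C * L) ^ n * t ^ n / n.factorial)
        Filter.atTop (nhds 0) := by
      have h := FloorSemiring.tendsto_pow_div_factorial_atTop (2 * C * L * t)
      have heq : (fun n : ℕ => M * (2 * C * L) ^ n * t ^ n / n.factorial)
          = fun n : ℕ => M * ((2 * C * L * t) ^ n / n.factorial) := by
        funext n; rw [mul_pow]; ring
      rw [heq]
      simpa using (h.const_mul M)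
    exact ge_of_tendsto htend (Filter.Eventually.of_forall fun n => key n k t ht i)
  exact abs_nonpos_iff.mp habs
end
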